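/- arXiv:2308.14487 — 3 statements merged into one kernel-verified Lean document; each statement's English description precedes it below -/
import Mathlib

section
/- Let b, σ ∈ ℝ. There exists a constant C > 0, depending only on b and σ, such that for every three times continuously differentiable function U : ℝ → ℝ with |U''(t)| ≤ M₂ and |U'''(t)| ≤ M₃ for all t ∈ ℝ, every x ∈ ℝ and every h ∈ (0, 1], one has |∫ U(x + b·h + σ·w) · w dγ_h(w) − σ·h·U'(x)| ≤ C·(M₂ + M₃)·h², where γ_h is the Gaussian measure on ℝ with mean 0 and variance h. -/
open MeasureTheory ProbabilityTheory

section GaussianTaylorHelpers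

open Real
open scoped NNReal ENNReal

lemma gauss_pow_integrable {k : ℕ} (hk : k ≤ 4) :
    Integrable (fun x : ℝ => x ^ k * Real.exp (-(x ^ 2) / 2)) volume := by
  have hbase : Integrable (fun x : ℝ => Real.exp (-(1/4 : ℝ) * x ^ 2)) volume :=
    integrable_exp_neg_mul_sq (by norm_num)
  refine (hbase.const_mul 64).mono' ?_ ?_
  · exact (Continuous.mul (continuous_pow k) (by continuity)).aestronglyMeasurable
  · refine Filter.Eventually.of_forall fun x => ?_
    have hx4 : |x| ^ k ≤ 1 + x ^ 4 := by
      rcases le_total (|x|) 1 with hx | hx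
      · have := pow_le_one₀ (abs_nonneg x) hx (n := k)
        nlinarith [pow_nonneg (abs_nonneg x) k, sq_nonneg (x^2)]
      · calc |x| ^ k ≤ |x| ^ 4 := pow_le_pow_right₀ hx hk
          _ = x ^ 4 := by rw [← abs_pow, abs_of_nonneg (by positivity)]
          _ ≤ 1 + x ^ 4 := by linarith
    have hexp : 1 + x ^ 4 ≤ 64 * Real.exp (x ^ 2 / 4) := by
      have h1 : (1 : ℝ) + x ^ 2 / 8 ≤ Real.exp (x ^ 2 / 8) := by
        have := Real.add_one_le_exp (x ^ 2 / 8); linarith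
      have h2 : Real.exp (x ^ 2 / 8) * Real.exp (x ^ 2 / 8) = Real.exp (x ^ 2 / 4) := by
        rw [← Real.exp_add]; ring_nf
      nlinarith [sq_nonneg x, sq_nonneg (x^2), Real.exp_pos (x ^ 2 / 8)]
    have habs : |x ^ k * Real.exp (-(x ^ 2) / 2)| = |x| ^ k * Real.exp (-(x ^ 2) / 2) := by
      rw [abs_mul, abs_pow, abs_of_pos (Real.exp_pos _)]
    rw [Real.norm_eq_abs, habs]
    calc |x| ^ k * Real.exp (-(x ^ 2) / 2) ≤ (64 * Real.exp (x ^ 2 / 4)) * Real.exp (-(x ^ 2) / 2) := by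
          refine mul_le_mul_of_nonneg_right ?_ (Real.exp_pos _).le
          exact hx4.trans hexp
      _ = 64 * Real.exp (-(1/4 : ℝ) * x ^ 2) := by
          rw [mul_assoc, ← Real.exp_add]; ring_nf

lemma std_pdf_eq (x : ℝ) :
    gaussianPDFReal 0 1 x = (Real.sqrt (2 * π))⁻¹ * Real.exp (-(x ^ 2) / 2) := by
  simp [gaussianPDFReal]

lemma std_integrable_iff {g : ℝ → ℝ} (hg : AEStronglyMeasurable g volume) :
    Integrable g (gaussianReal 0 1) ↔
      Integrable (fun x => gaussianPDFReal 0 1 x * g x) volume := by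
  rw [gaussianReal_of_var_ne_zero 0 one_ne_zero]
  have : (gaussianPDF 0 1) = fun x => ((gaussianPDFReal 0 1 x).toNNReal : ℝ≥0∞) := rfl
  rw [this, integrable_withDensity_iff_integrable_smul
    ((measurable_gaussianPDFReal 0 1).real_toNNReal)]
  constructor <;> intro h <;> refine h.congr (Filter.Eventually.of_forall fun x => ?_) <;>
    simp [NNReal.smul_def, Real.coe_toNNReal _ (gaussianPDFReal_nonneg 0 1 x)]

lemma std_integral_eq (g : ℝ → ℝ) :
    ∫ x, g x ∂(gaussianReal 0 1) = ∫ x, gaussianPDFReal 0 1 x * g x := by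
  rw [gaussianReal_of_var_ne_zero 0 one_ne_zero]
  have : (gaussianPDF 0 1) = fun x => ((gaussianPDFReal 0 1 x).toNNReal : ℝ≥0∞) := rfl
  rw [this, integral_withDensity_eq_integral_smul
    ((measurable_gaussianPDFReal 0 1).real_toNNReal)]
  congr 1; ext x
  simp [NNReal.smul_def, Real.coe_toNNReal _ (gaussianPDFReal_nonneg 0 1 x)]

lemma std_pdf_pow_integrable {k : ℕ} (hk : k ≤ 4) :
    Integrable (fun x : ℝ => gaussianPDFReal 0 1 x * x ^ k) volume := by
  refine ((gauss_pow_integrable hk).const_mul ((Real.sqrt (2 * π))⁻¹)).congr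
    (Filter.Eventually.of_forall fun x => ?_)
  simp only [std_pdf_eq]; ring

lemma std_moment_integrable {k : ℕ} (hk : k ≤ 4) :
    Integrable (fun x : ℝ => x ^ k) (gaussianReal 0 1) := by
  rw [std_integrable_iff (continuous_pow k).aestronglyMeasurable]
  exact std_pdf_pow_integrable hk

lemma exp_deriv_aux (x : ℝ) :
    HasDerivAt (fun x : ℝ => Real.exp (-(x ^ 2) / 2))
      (Real.exp (-(x ^ 2) / 2) * (-x)) x := by
  have h1 : HasDerivAt (fun x : ℝ => -(x ^ 2) / 2) (-x) x := by
    have := ((hasDerivAt_pow 2 x).neg.div_const 2)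
    refine this.congr_deriv ?_; simp; ring
  exact h1.exp

lemma std_moment_one : ∫ x, x ∂(gaussianReal 0 1) = 0 := by
  have h := std_integral_eq (fun x => x)
  rw [h]
  have key : ∫ x : ℝ, gaussianPDFReal 0 1 x * x = 0 := by
    refine integral_eq_zero_of_hasDerivAt_of_integrable
      (f := fun x : ℝ => -(Real.sqrt (2 * π))⁻¹ * Real.exp (-(x ^ 2) / 2))
      (fun x => ?_) ?_ ?_
    · have := (exp_deriv_aux x).const_mul (-(Real.sqrt (2 * π))⁻¹)
      refine this.congr_deriv ?_
      rw [std_pdf_eq]; ring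
    · simpa using std_pdf_pow_integrable (k := 1) (by norm_num)
    · refine ((gauss_pow_integrable (k := 0) (by norm_num)).const_mul
        (-(Real.sqrt (2 * π))⁻¹)).congr (Filter.Eventually.of_forall fun x => ?_)
      ring
  simpa using key

lemma std_moment_two : ∫ x, x ^ 2 ∂(gaussianReal 0 1) = 1 := by
  rw [std_integral_eq]
  have key : ∫ x : ℝ, (gaussianPDFReal 0 1 x * x ^ 2 - gaussianPDFReal 0 1 x) = 0 := by
    refine integral_eq_zero_of_hasDerivAt_of_integrable
      (f := fun x : ℝ => -(Real.sqrt (2 * π))⁻¹ * (x * Real.exp (-(x ^ 2) / 2)))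
      (fun x => ?_) ?_ ?_
    · have := ((hasDerivAt_id x).mul (exp_deriv_aux x)).const_mul (-(Real.sqrt (2 * π))⁻¹)
      refine this.congr_deriv ?_
      rw [std_pdf_eq]; simp; ring
    · exact (std_pdf_pow_integrable (k := 2) (by norm_num)).sub (integrable_gaussianPDFReal 0 1)
    · refine ((gauss_pow_integrable (k := 1) (by norm_num)).const_mul
        (-(Real.sqrt (2 * π))⁻¹)).congr (Filter.Eventually.of_forall fun x => ?_)
      ring
  rw [integral_sub (std_pdf_pow_integrable (k := 2) (by norm_num))
    (integrable_gaussianPDFReal 0 1), integral_gaussianPDFReal_eq_one 0 one_ne_zero] at key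
  linarith

lemma std_moment_three : ∫ x, x ^ 3 ∂(gaussianReal 0 1) = 0 := by
  rw [std_integral_eq]
  refine integral_eq_zero_of_hasDerivAt_of_integrable
    (f := fun x : ℝ => -(Real.sqrt (2 * π))⁻¹ * ((x ^ 2 + 2) * Real.exp (-(x ^ 2) / 2)))
    (fun x => ?_) ?_ ?_
  · have := (((hasDerivAt_pow 2 x).add_const 2).mul (exp_deriv_aux x)).const_mul
      (-(Real.sqrt (2 * π))⁻¹)
    refine this.congr_deriv ?_
    rw [std_pdf_eq]; simp; ring
  · simpa using std_pdf_pow_integrable (k := 3) (by norm_num)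
  · refine (((gauss_pow_integrable (k := 2) (by norm_num)).const_mul
      (-(Real.sqrt (2 * π))⁻¹)).add ((gauss_pow_integrable (k := 0) (by norm_num)).const_mul
      (-2 * (Real.sqrt (2 * π))⁻¹))).congr (Filter.Eventually.of_forall fun x => ?_)
    simp only [Pi.add_apply]; ring

lemma gauss_scale {h : ℝ} (hh : 0 ≤ h) :
    Measure.map (fun w => Real.sqrt h * w) (gaussianReal 0 1) = gaussianReal 0 h.toNNReal := by
  have := gaussianReal_map_const_mul (μ := 0) (v := 1) (Real.sqrt h)
  rw [this]
  congr 1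
  · ring
  · ext
    simp [Real.sq_sqrt hh, Real.coe_toNNReal _ hh]

-- Lipschitz bound for deriv U from bound on iteratedDeriv 2 U
lemma deriv_lipschitz {U : ℝ → ℝ} (hU : ContDiff ℝ 3 U) {M : ℝ}
    (hM : ∀ t : ℝ, |iteratedDeriv 2 U t| ≤ M) (a c : ℝ) :
    |deriv U a - deriv U c| ≤ M * |a - c| := by
  have d1 : Differentiable ℝ (deriv U) := by
    have := hU.differentiable_iteratedDeriv 1 (by norm_num)
    rwa [iteratedDeriv_one] at this
  have e2 : deriv (deriv U) = iteratedDeriv 2 U := by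
    rw [show (2:ℕ) = 1 + 1 from rfl, iteratedDeriv_succ, iteratedDeriv_one]
  have := Convex.norm_image_sub_le_of_norm_deriv_le (f := deriv U) (s := Set.univ)
    (fun x _ => (d1 x)) (fun x _ => by rw [e2, Real.norm_eq_abs]; exact hM x)
    convex_univ (Set.mem_univ c) (Set.mem_univ a)
  simpa [Real.norm_eq_abs] using this

lemma taylor_three {U : ℝ → ℝ} (hU : ContDiff ℝ 3 U) {M : ℝ}
    (hM : ∀ t : ℝ, |iteratedDeriv 3 U t| ≤ M) (z y : ℝ) :
    |U y - U z - deriv U z * (y - z) - iteratedDeriv 2 U z * (y - z) ^ 2 / 2|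
      ≤ M * |y - z| ^ 3 := by
  have hM0 : 0 ≤ M := (abs_nonneg _).trans (hM z)
  have d0 : Differentiable ℝ U := hU.differentiable (by norm_num)
  have d1 : Differentiable ℝ (deriv U) := by
    have := hU.differentiable_iteratedDeriv 1 (by norm_num)
    rwa [iteratedDeriv_one] at this
  have d2 : Differentiable ℝ (iteratedDeriv 2 U) :=
    hU.differentiable_iteratedDeriv 2 (by norm_num)
  have e2 : deriv (deriv U) = iteratedDeriv 2 U := by
    rw [show (2:ℕ) = 1 + 1 from rfl, iteratedDeriv_succ, iteratedDeriv_one]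
  have e3 : deriv (iteratedDeriv 2 U) = iteratedDeriv 3 U :=
    (iteratedDeriv_succ (n := 2) (f := U)).symm
  -- Step A : second derivative is M-Lipschitz
  have stepA : ∀ t : ℝ, |iteratedDeriv 2 U t - iteratedDeriv 2 U z| ≤ M * |t - z| := by
    intro t
    have := Convex.norm_image_sub_le_of_norm_deriv_le (f := iteratedDeriv 2 U) (s := Set.univ)
      (fun x _ => (d2 x)) (fun x _ => by rw [e3, Real.norm_eq_abs]; exact hM x)
      convex_univ (Set.mem_univ z) (Set.mem_univ t)
    simpa [Real.norm_eq_abs] using this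
  -- abs bound on uIcc
  have huIcc : ∀ y t : ℝ, t ∈ Set.uIcc z y → |t - z| ≤ |y - z| := by
    intro y t ht
    rcases Set.mem_uIcc.mp ht with ⟨h1, h2⟩ | ⟨h1, h2⟩
    · rw [abs_of_nonneg (by linarith), abs_of_nonneg (by linarith)]; linarith
    · rw [abs_of_nonpos (by linarith), abs_of_nonpos (by linarith)]; linarith
  -- Step B : first-order Taylor bound for deriv U
  have stepB : ∀ y : ℝ,
      |deriv U y - deriv U z - iteratedDeriv 2 U z * (y - z)| ≤ M * |y - z| ^ 2 := by
    intro y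
    set g : ℝ → ℝ := fun t => deriv U t - deriv U z - iteratedDeriv 2 U z * (t - z) with hg
    have hgderiv : ∀ t : ℝ, HasDerivAt g (iteratedDeriv 2 U t - iteratedDeriv 2 U z) t := by
      intro t
      have h1 : HasDerivAt (fun t : ℝ => deriv U t - deriv U z) (deriv (deriv U) t) t :=
        ((d1 t).hasDerivAt).sub_const _
      have h2 : HasDerivAt (fun t : ℝ => iteratedDeriv 2 U z * (t - z))
          (iteratedDeriv 2 U z) t := by
        simpa using ((hasDerivAt_id t).sub_const z).const_mul (iteratedDeriv 2 U z)
      have := h1.sub h2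
      rwa [e2] at this
    have key := Convex.norm_image_sub_le_of_norm_hasDerivWithin_le
      (f := g) (f' := fun t => iteratedDeriv 2 U t - iteratedDeriv 2 U z)
      (s := Set.uIcc z y) (C := M * |y - z|)
      (fun t _ => (hgderiv t).hasDerivWithinAt)
      (fun t ht => by
        rw [Real.norm_eq_abs]
        exact (stepA t).trans (mul_le_mul_of_nonneg_left (huIcc y t ht) hM0))
      (convex_uIcc z y) Set.left_mem_uIcc Set.right_mem_uIcc
    have hgz : g z = 0 := by simp [hg]
    rw [hgz, sub_zero, Real.norm_eq_abs, Real.norm_eq_abs] at key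
    calc |g y| ≤ M * |y - z| * |y - z| := key
      _ = M * |y - z| ^ 2 := by ring
  -- Step C
  set H : ℝ → ℝ := fun t =>
    U t - U z - deriv U z * (t - z) - iteratedDeriv 2 U z * (t - z) ^ 2 / 2 with hH
  have hHderiv : ∀ t : ℝ, HasDerivAt H
      (deriv U t - deriv U z - iteratedDeriv 2 U z * (t - z)) t := by
    intro t
    have h1 : HasDerivAt (fun t : ℝ => U t - U z) (deriv U t) t := ((d0 t).hasDerivAt).sub_const _
    have h2 : HasDerivAt (fun t : ℝ => deriv U z * (t - z)) (deriv U z) t := by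
      simpa using ((hasDerivAt_id t).sub_const z).const_mul (deriv U z)
    have h3 : HasDerivAt (fun t : ℝ => iteratedDeriv 2 U z * (t - z) ^ 2 / 2)
        (iteratedDeriv 2 U z * (t - z)) t := by
      have hb : HasDerivAt (fun t : ℝ => (t - z) ^ 2) (2 * (t - z)) t := by
        exact (((hasDerivAt_id t).sub_const z).pow 2).congr_deriv (by simp)
      have := (hb.const_mul (iteratedDeriv 2 U z)).div_const 2
      refine this.congr_deriv ?_; ring
    have := (h1.sub h2).sub h3
    exact this
  have key := Convex.norm_image_sub_le_of_norm_hasDerivWithin_le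
    (f := H) (f' := fun t => deriv U t - deriv U z - iteratedDeriv 2 U z * (t - z))
    (s := Set.uIcc z y) (C := M * |y - z| ^ 2)
    (fun t _ => (hHderiv t).hasDerivWithinAt)
    (fun t ht => by
      rw [Real.norm_eq_abs]
      refine (stepB t).trans (mul_le_mul_of_nonneg_left ?_ hM0)
      exact pow_le_pow_left₀ (abs_nonneg _) (huIcc y t ht) 2)
    (convex_uIcc z y) Set.left_mem_uIcc Set.right_mem_uIcc
  have hHz : H z = 0 := by simp [hH]
  rw [hHz, sub_zero, Real.norm_eq_abs, Real.norm_eq_abs] at key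
  calc |H y| ≤ M * |y - z| ^ 2 * |y - z| := key
    _ = M * |y - z| ^ 3 := by ring

end GaussianTaylorHelpers

open Real in
open scoped NNReal ENNReal in
/-- Third-order Gaussian Taylor estimate: there is a constant `C > 0` depending
only on `b` and `σ` such that for every `C³` function `U : ℝ → ℝ` with second
derivative bounded by `M₂` and third derivative bounded by `M₃`, every `x ∈ ℝ`
and every `h ∈ (0, 1]`,
`|∫ U(x + b h + σ w) w dγ_h(w) − σ h U'(x)| ≤ C (M₂ + M₃) h²`,
where `γ_h` is the Gaussian measure on `ℝ` with mean `0` and variance `h`. -/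
theorem gaussian_autodiff_taylor_estimate (b σ : ℝ) :
    ∃ C > (0 : ℝ), ∀ (M₂ M₃ : ℝ) (U : ℝ → ℝ), ContDiff ℝ 3 U →
      (∀ t : ℝ, |iteratedDeriv 2 U t| ≤ M₂) →
      (∀ t : ℝ, |iteratedDeriv 3 U t| ≤ M₃) →
      ∀ (x h : ℝ), 0 < h → h ≤ 1 →
        |(∫ w, U (x + b * h + σ * w) * w ∂(gaussianReal 0 h.toNNReal))
            - σ * h * deriv U x|
          ≤ C * (M₂ + M₃) * h ^ 2 := by
  set K : ℝ := ∫ w, w ^ 4 ∂(gaussianReal 0 1) with hKdef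
  have hK0 : 0 ≤ K := integral_nonneg fun w => by positivity
  refine ⟨|σ| * |b| + |σ| ^ 3 * K + 1, by positivity, ?_⟩
  intro M₂ M₃ U hU h2 h3 x h hh h1
  have hM2 : 0 ≤ M₂ := (abs_nonneg _).trans (h2 0)
  have hM3 : 0 ≤ M₃ := (abs_nonneg _).trans (h3 0)
  set γ : Measure ℝ := gaussianReal 0 h.toNNReal with hγdef
  set s : ℝ := Real.sqrt h with hs
  have hs2 : s ^ 2 = h := Real.sq_sqrt hh.le
  have hmap : γ = Measure.map (fun w => s * w) (gaussianReal 0 1) := (gauss_scale hh.le).symm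
  have hmeas : AEMeasurable (fun w : ℝ => s * w) (gaussianReal 0 1) :=
    (measurable_const_mul s).aemeasurable
  -- moments of γ
  have moment_int : ∀ k : ℕ, k ≤ 4 → Integrable (fun w : ℝ => w ^ k) γ := by
    intro k hk
    rw [hmap, integrable_map_measure (continuous_pow k).aestronglyMeasurable hmeas]
    refine ((std_moment_integrable hk).const_mul (s ^ k)).congr
      (Filter.Eventually.of_forall fun w => ?_)
    simp [Function.comp, mul_pow]
  have moment_eq : ∀ k : ℕ, k ≤ 4 →
      ∫ w, w ^ k ∂γ = s ^ k * ∫ w, w ^ k ∂(gaussianReal 0 1) := by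
    intro k hk
    rw [hmap, integral_map hmeas (continuous_pow k).aestronglyMeasurable]
    simp_rw [mul_pow]
    exact integral_const_mul _ _
  have m1 : ∫ w, w ∂γ = 0 := by
    have := moment_eq 1 (by norm_num)
    simpa [std_moment_one] using this
  have m2 : ∫ w, w ^ 2 ∂γ = h := by
    rw [moment_eq 2 (by norm_num), std_moment_two, hs2]; ring
  have m3 : ∫ w, w ^ 3 ∂γ = 0 := by
    rw [moment_eq 3 (by norm_num), std_moment_three]; ring
  have m4 : ∫ w, w ^ 4 ∂γ = h ^ 2 * K := by
    rw [moment_eq 4 (by norm_num), ← hKdef]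
    have : s ^ 4 = h ^ 2 := by rw [← hs2]; ring
    rw [this]
  -- Taylor decomposition
  set z : ℝ := x + b * h with hz
  set T : ℝ → ℝ := fun w =>
    U (z + σ * w) - U z - deriv U z * (σ * w) - iteratedDeriv 2 U z * (σ * w) ^ 2 / 2 with hT
  have hTbound : ∀ w : ℝ, |T w| ≤ M₃ * |σ| ^ 3 * |w| ^ 3 := by
    intro w
    have := taylor_three hU h3 z (z + σ * w)
    simp only [add_sub_cancel_left] at this
    calc |T w| ≤ M₃ * |σ * w| ^ 3 := this
      _ = M₃ * |σ| ^ 3 * |w| ^ 3 := by rw [abs_mul]; ring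
  have hTcont : Continuous T := by
    have hUc : Continuous U := hU.continuous
    refine ((((hUc.comp (by continuity)).sub continuous_const).sub ?_).sub ?_)
    · exact continuous_const.mul (continuous_const.mul continuous_id)
    · exact (continuous_const.mul ((continuous_const.mul continuous_id).pow 2)).div_const 2
  have hbd : ∀ w : ℝ, |T w * w| ≤ M₃ * |σ| ^ 3 * w ^ 4 := by
    intro w
    have h4 : |w| ^ 3 * |w| = w ^ 4 := by
      have h5 : w ^ 4 = |w ^ 4| := (abs_of_nonneg (by positivity)).symm
      rw [h5, abs_pow]; ring
    calc |T w * w| = |T w| * |w| := abs_mul _ _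
      _ ≤ (M₃ * |σ| ^ 3 * |w| ^ 3) * |w| :=
          mul_le_mul_of_nonneg_right (hTbound w) (abs_nonneg w)
      _ = M₃ * |σ| ^ 3 * w ^ 4 := by rw [mul_assoc, h4]
  have I4 : Integrable (fun w : ℝ => (M₃ * |σ| ^ 3) * w ^ 4) γ :=
    (moment_int 4 (by norm_num)).const_mul _
  have IT : Integrable (fun w : ℝ => T w * w) γ := by
    refine I4.mono' ((hTcont.mul continuous_id).aestronglyMeasurable) ?_
    refine Filter.Eventually.of_forall fun w => ?_
    rw [Real.norm_eq_abs]
    exact hbd w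
  have Iw : Integrable (fun w : ℝ => w) γ := by
    simpa using moment_int 1 (by norm_num)
  have I1 : Integrable (fun w : ℝ => U z * w) γ := Iw.const_mul _
  have I2 : Integrable (fun w : ℝ => (deriv U z * σ) * w ^ 2) γ :=
    (moment_int 2 (by norm_num)).const_mul _
  have I3 : Integrable (fun w : ℝ => (iteratedDeriv 2 U z * σ ^ 2 / 2) * w ^ 3) γ :=
    (moment_int 3 (by norm_num)).const_mul _
  -- the decomposition of the integrand
  have Feq : (fun w : ℝ => U (x + b * h + σ * w) * w) = fun w : ℝ =>
      T w * w + (U z * w + ((deriv U z * σ) * w ^ 2 +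
        (iteratedDeriv 2 U z * σ ^ 2 / 2) * w ^ 3)) := by
    funext w
    simp only [hT, hz]
    ring
  have eBC : ∫ w, ((deriv U z * σ) * w ^ 2 + (iteratedDeriv 2 U z * σ ^ 2 / 2) * w ^ 3) ∂γ
      = (∫ w, (deriv U z * σ) * w ^ 2 ∂γ) + ∫ w, (iteratedDeriv 2 U z * σ ^ 2 / 2) * w ^ 3 ∂γ :=
    integral_add I2 I3
  have eABC : ∫ w, (U z * w + ((deriv U z * σ) * w ^ 2 +
        (iteratedDeriv 2 U z * σ ^ 2 / 2) * w ^ 3)) ∂γ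
      = (∫ w, U z * w ∂γ) + ∫ w, ((deriv U z * σ) * w ^ 2 +
        (iteratedDeriv 2 U z * σ ^ 2 / 2) * w ^ 3) ∂γ :=
    integral_add I1 (I2.add I3)
  have eT : ∫ w, (T w * w + (U z * w + ((deriv U z * σ) * w ^ 2 +
        (iteratedDeriv 2 U z * σ ^ 2 / 2) * w ^ 3))) ∂γ
      = (∫ w, T w * w ∂γ) + ∫ w, (U z * w + ((deriv U z * σ) * w ^ 2 +
        (iteratedDeriv 2 U z * σ ^ 2 / 2) * w ^ 3)) ∂γ :=
    integral_add IT (I1.add (I2.add I3))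
  have hint : ∫ w, U (x + b * h + σ * w) * w ∂γ
      = (∫ w, T w * w ∂γ) + σ * h * deriv U z := by
    rw [Feq, eT, eABC, eBC, integral_const_mul, integral_const_mul, integral_const_mul,
      m1, m2, m3]
    ring
  -- bound on the remainder integral
  have habs : |∫ w, T w * w ∂γ| ≤ M₃ * |σ| ^ 3 * (h ^ 2 * K) := by
    calc |∫ w, T w * w ∂γ| ≤ ∫ w, |T w * w| ∂γ := by
          have := norm_integral_le_integral_norm (μ := γ) (fun w => T w * w)
          simp only [Real.norm_eq_abs] at this
          exact this
      _ ≤ ∫ w, (M₃ * |σ| ^ 3) * w ^ 4 ∂γ := integral_mono IT.abs I4 fun w => hbd w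
      _ = M₃ * |σ| ^ 3 * (h ^ 2 * K) := by rw [integral_const_mul, m4]
  -- derivative comparison
  have hd : |deriv U z - deriv U x| ≤ M₂ * (|b| * h) := by
    have := deriv_lipschitz hU h2 z x
    have hzx : |z - x| = |b| * h := by
      rw [hz]; rw [show x + b * h - x = b * h by ring, abs_mul, abs_of_pos hh]
    rwa [hzx] at this
  -- conclusion
  rw [hint]
  have hsplit : (∫ w, T w * w ∂γ) + σ * h * deriv U z - σ * h * deriv U x
      = (∫ w, T w * w ∂γ) + σ * h * (deriv U z - deriv U x) := by ring
  rw [hsplit]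
  calc |(∫ w, T w * w ∂γ) + σ * h * (deriv U z - deriv U x)|
      ≤ |∫ w, T w * w ∂γ| + |σ * h * (deriv U z - deriv U x)| := abs_add_le _ _
    _ ≤ M₃ * |σ| ^ 3 * (h ^ 2 * K) + |σ| * h * (M₂ * (|b| * h)) := by
        refine add_le_add habs ?_
        rw [abs_mul, abs_mul, abs_of_pos hh]
        exact mul_le_mul_of_nonneg_left hd (by positivity)
    _ ≤ (|σ| * |b| + |σ| ^ 3 * K + 1) * (M₂ + M₃) * h ^ 2 := by
        have hcoef : M₃ * |σ| ^ 3 * K + |σ| * (M₂ * |b|)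
            ≤ (|σ| * |b| + |σ| ^ 3 * K + 1) * (M₂ + M₃) := by
          nlinarith [mul_nonneg hM2 hK0, mul_nonneg hM3 hK0, abs_nonneg σ, abs_nonneg b,
            mul_nonneg (mul_nonneg hM2 (abs_nonneg σ)) (abs_nonneg b),
            mul_nonneg (mul_nonneg hM3 (abs_nonneg σ)) (abs_nonneg b),
            mul_nonneg (mul_nonneg hM2 (pow_nonneg (abs_nonneg σ) 3)) hK0,
            mul_nonneg (mul_nonneg hM3 (pow_nonneg (abs_nonneg σ) 3)) hK0,
            mul_nonneg (mul_nonneg hM3 (abs_nonneg σ)) (abs_nonneg b)]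
        have hh2 : (0:ℝ) ≤ h ^ 2 := sq_nonneg h
        calc M₃ * |σ| ^ 3 * (h ^ 2 * K) + |σ| * h * (M₂ * (|b| * h))
            = (M₃ * |σ| ^ 3 * K + |σ| * (M₂ * |b|)) * h ^ 2 := by ring
          _ ≤ ((|σ| * |b| + |σ| ^ 3 * K + 1) * (M₂ + M₃)) * h ^ 2 :=
              mul_le_mul_of_nonneg_right hcoef hh2
          _ = (|σ| * |b| + |σ| ^ 3 * K + 1) * (M₂ + M₃) * h ^ 2 := by ring
end

section
/- Let b, σ ∈ ℝ. There exists a constant C > 0, depending only on b and σ, such that the following holds. Let ρ : ℝ → ℝ be three times continuously differentiable with |ρ''(t)| ≤ M and |ρ'''(t)| ≤ M for all t ∈ ℝ, let γ ≥ 1, and let U : ℝ → ℝ be a one-hidden-layer neural network U(x) = Σ_{i=1}^m c_i ρ(a_i·x + b_i) + b_0 whose weights satisfy the constraint max_{i=1,…,m} |a_i| ≤ γ and Σ_{i=1}^m |c_i| ≤ γ. Then for every x ∈ ℝ and every h ∈ (0, 1], |(1/h)·∫ U(x + b·h + σ·w) · w dγ_h(w) − σ·U'(x)| ≤ C·M·(γ³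 + γ⁴)·h, where γ_h is the Gaussian measure on ℝ with mean 0 and variance h. -/
open MeasureTheory ProbabilityTheory Real Filter Set
open scoped ENNReal NNReal

namespace GaussAux

lemma pow_le_exp_aux {y : ℝ} (hy : 0 ≤ y) (n : ℕ) : y ^ n / n.factorial ≤ Real.exp y := by
  have h := Real.sum_le_exp_of_nonneg hy (n + 1)
  refine le_trans ?_ h
  have : (y ^ n / n.factorial) = ∑ i ∈ Finset.range (n+1), if i = n then y ^ i / i.factorial else 0 := by
    simp [Finset.sum_ite_eq' (Finset.range (n+1)) n]
  rw [this]
  apply Finset.sum_le_sum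
  intro i _
  by_cases hi : i = n <;> simp [hi] <;> positivity

lemma abs_pow_mul_exp_le {bb : ℝ} (hb : 0 < bb) (n : ℕ) (x : ℝ) :
    |x| ^ n * Real.exp (-bb * x ^ 2) ≤
      Real.exp (-bb * x ^ 2) + (n.factorial * (2 / bb) ^ n) * Real.exp (-(bb / 2) * x ^ 2) := by
  have h1 : |x| ^ n ≤ 1 + (x ^ 2) ^ n := by
    rcases le_or_gt (|x|) 1 with hx | hx
    · have : |x| ^ n ≤ 1 := pow_le_one₀ (abs_nonneg x) hx
      nlinarith [pow_nonneg (sq_nonneg x) n]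
    · have h2 : |x| ^ n ≤ (x ^ 2) ^ n := by
        apply pow_le_pow_left₀ (abs_nonneg x)
        nlinarith [abs_nonneg x, sq_abs x]
      linarith
  have h2 : (x ^ 2) ^ n ≤ n.factorial * (2 / bb) ^ n * Real.exp ((bb / 2) * x ^ 2) := by
    have h3 := pow_le_exp_aux (y := (bb / 2) * x ^ 2) (by positivity) n
    rw [div_le_iff₀ (by positivity)] at h3
    rw [mul_pow] at h3
    have hfac : (0:ℝ) < n.factorial := by positivity
    have hbbn : (0:ℝ) < (bb / 2) ^ n := by positivity
    calc (x ^ 2) ^ n = ((bb/2) ^ n * (x ^ 2) ^ n) * (2 / bb) ^ n := by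
            rw [mul_comm, ← mul_assoc, ← mul_pow]
            have : 2 / bb * (bb / 2) = 1 := by field_simp
            rw [this, one_pow, one_mul]
      _ ≤ (Real.exp ((bb / 2) * x ^ 2) * n.factorial) * (2 / bb) ^ n := by
            apply mul_le_mul_of_nonneg_right h3 (by positivity)
      _ = n.factorial * (2 / bb) ^ n * Real.exp ((bb / 2) * x ^ 2) := by ring
  have key : |x| ^ n * Real.exp (-bb * x ^ 2)
      ≤ (1 + (x ^ 2) ^ n) * Real.exp (-bb * x ^ 2) :=
    mul_le_mul_of_nonneg_right h1 (Real.exp_pos _).le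
  have key2 : (1 + (x ^ 2) ^ n) * Real.exp (-bb * x ^ 2)
      ≤ Real.exp (-bb * x ^ 2)
        + (n.factorial * (2 / bb) ^ n * Real.exp ((bb / 2) * x ^ 2)) * Real.exp (-bb * x ^ 2) := by
    nlinarith [Real.exp_pos (-bb * x ^ 2), h2]
  have key3 : (n.factorial * (2 / bb) ^ n * Real.exp ((bb / 2) * x ^ 2)) * Real.exp (-bb * x ^ 2)
      = (n.factorial * (2 / bb) ^ n) * Real.exp (-(bb / 2) * x ^ 2) := by
    rw [mul_assoc, ← Real.exp_add]
    ring_nf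
  linarith [key, key2, key3.le, key3.ge]

lemma integrable_abs_pow_mul_exp {bb : ℝ} (hb : 0 < bb) (n : ℕ) :
    Integrable (fun x : ℝ => |x| ^ n * Real.exp (-bb * x ^ 2)) := by
  have hg : Integrable (fun x : ℝ => Real.exp (-bb * x ^ 2)
      + (n.factorial * (2 / bb) ^ n) * Real.exp (-(bb / 2) * x ^ 2)) :=
    (integrable_exp_neg_mul_sq hb).add ((integrable_exp_neg_mul_sq (by positivity)).const_mul _)
  refine hg.mono' ?_ ?_
  · exact ((continuous_abs.pow n).mul (continuous_const.mul (continuous_pow 2)).rexp).aestronglyMeasurable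
  · filter_upwards with x
    rw [Real.norm_eq_abs, abs_of_nonneg (by positivity)]
    exact abs_pow_mul_exp_le hb n x

lemma integrable_pow_mul_exp {bb : ℝ} (hb : 0 < bb) (n : ℕ) :
    Integrable (fun x : ℝ => x ^ n * Real.exp (-bb * x ^ 2)) := by
  refine (integrable_abs_pow_mul_exp hb n).mono' ?_ ?_
  · exact ((continuous_pow n).mul (continuous_const.mul (continuous_pow 2)).rexp).aestronglyMeasurable
  · filter_upwards with x
    rw [Real.norm_eq_abs, abs_mul, abs_pow, abs_of_nonneg (Real.exp_pos _).le]

end GaussAux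
namespace GaussAux

lemma integral_comp_neg' (f : ℝ → ℝ) : ∫ x, f (-x) = ∫ x, f x := by
  have A : MeasurableEmbedding fun x : ℝ => -x :=
    (Homeomorph.neg ℝ).measurableEmbedding
  conv_rhs => rw [← Measure.map_neg_eq_self (volume : Measure ℝ)]
  exact (A.integral_map f).symm

lemma integral_odd_eq_zero (f : ℝ → ℝ) (hodd : ∀ x, f (-x) = -f x) : ∫ x, f x = 0 := by
  have h1 : ∫ x, f (-x) = ∫ x, f x := integral_comp_neg' f
  have h2 : ∫ x, f (-x) = -∫ x, f x := by
    simp_rw [hodd]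
    exact integral_neg f
  linarith

lemma tendsto_pow_exp_atTop {bb : ℝ} (hb : 0 < bb) (n : ℕ) :
    Tendsto (fun x : ℝ => x ^ n * Real.exp (-bb * x ^ 2)) atTop (nhds 0) := by
  have hlim : Tendsto (fun x : ℝ => Real.exp (-bb * x ^ 2)
      + (n.factorial * (2 / bb) ^ n) * Real.exp (-(bb / 2) * x ^ 2)) atTop (nhds 0) := by
    have h1 : Tendsto (fun x : ℝ => Real.exp (-bb * x ^ 2)) atTop (nhds 0) := by
      apply Real.tendsto_exp_atBot.comp
      apply Tendsto.const_mul_atTop_of_neg (by linarith : -bb < 0)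
      exact tendsto_pow_atTop (by norm_num)
    have h2 : Tendsto (fun x : ℝ => Real.exp (-(bb/2) * x ^ 2)) atTop (nhds 0) := by
      apply Real.tendsto_exp_atBot.comp
      apply Tendsto.const_mul_atTop_of_neg (by linarith : -(bb/2) < 0)
      exact tendsto_pow_atTop (by norm_num)
    simpa using h1.add (h2.const_mul _)
  apply squeeze_zero_norm _ hlim
  intro x
  rw [Real.norm_eq_abs, abs_mul, abs_pow, abs_of_nonneg (Real.exp_pos _).le]
  exact abs_pow_mul_exp_le hb n x

lemma tendsto_pow_exp_atBot {bb : ℝ} (hb : 0 < bb) (n : ℕ) :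
    Tendsto (fun x : ℝ => x ^ n * Real.exp (-bb * x ^ 2)) atBot (nhds 0) := by
  have h := (tendsto_pow_exp_atTop hb n).comp tendsto_neg_atBot_atTop
  have heq : (fun x : ℝ => x ^ n * Real.exp (-bb * x ^ 2)) =
      (fun x : ℝ => (-1 : ℝ) ^ n * (((-x) ^ n) * Real.exp (-bb * (-x) ^ 2))) := by
    funext x
    rw [neg_sq, ← mul_assoc, ← mul_pow]
    norm_num
  rw [heq]
  simpa using (h.const_mul ((-1 : ℝ) ^ n))

lemma integral_deriv_eq_zero (f f' : ℝ → ℝ) (hd : ∀ x, HasDerivAt f (f' x) x)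
    (hi : Integrable f') (ht : Tendsto f atTop (nhds 0)) (hb : Tendsto f atBot (nhds 0)) :
    ∫ x, f' x = 0 := by
  have h1 : ∫ x in Iic (0:ℝ), f' x = f 0 - 0 :=
    integral_Iic_of_hasDerivAt_of_tendsto' (fun x _ => hd x) hi.integrableOn hb
  have h2 : ∫ x in Ioi (0:ℝ), f' x = 0 - f 0 :=
    integral_Ioi_of_hasDerivAt_of_tendsto' (fun x _ => hd x) hi.integrableOn ht
  rw [← intervalIntegral.integral_Iic_add_Ioi (b := (0:ℝ)) hi.integrableOn hi.integrableOn]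
  rw [h1, h2]
  ring

lemma moment_rec {bb : ℝ} (hb : 0 < bb) (k : ℕ) :
    (2 * bb) * ∫ x, x ^ (k + 2) * Real.exp (-bb * x ^ 2)
      = (k + 1 : ℝ) * ∫ x, x ^ k * Real.exp (-bb * x ^ 2) := by
  have hd : ∀ x : ℝ, HasDerivAt (fun x : ℝ => x ^ (k+1) * Real.exp (-bb * x ^ 2))
      ((k+1 : ℝ) * x ^ k * Real.exp (-bb * x ^ 2)
        - (2 * bb) * (x ^ (k+2) * Real.exp (-bb * x ^ 2))) x := by
    intro x
    have h1 : HasDerivAt (fun x : ℝ => x ^ (k+1)) ((k+1 : ℝ) * x ^ k) x := by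
      simpa using hasDerivAt_pow (k+1) x
    have h2 : HasDerivAt (fun x : ℝ => Real.exp (-bb * x ^ 2))
        (Real.exp (-bb * x ^ 2) * (-bb * (2 * x))) x := by
      have h3 : HasDerivAt (fun x : ℝ => -bb * x ^ 2) (-bb * (2 * x)) x := by
        simpa using ((hasDerivAt_pow 2 x).const_mul (-bb))
      exact h3.exp
    have := h1.mul h2
    refine this.congr_deriv ?_
    ring
  have hik : Integrable (fun x : ℝ => (k+1 : ℝ) * x ^ k * Real.exp (-bb * x ^ 2)) := by
    simpa [mul_assoc] using ((integrable_pow_mul_exp hb k).const_mul (k+1 : ℝ))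
  have hik2 : Integrable (fun x : ℝ => (2 * bb) * (x ^ (k+2) * Real.exp (-bb * x ^ 2))) :=
    (integrable_pow_mul_exp hb (k+2)).const_mul _
  have hint := hik.sub hik2
  have hz := integral_deriv_eq_zero _ _ hd hint (tendsto_pow_exp_atTop hb (k+1))
    (tendsto_pow_exp_atBot hb (k+1))
  rw [integral_sub hik hik2] at hz
  have e1 : ∫ a : ℝ, (k+1 : ℝ) * a ^ k * Real.exp (-bb * a ^ 2)
      = (k+1 : ℝ) * ∫ a : ℝ, a ^ k * Real.exp (-bb * a ^ 2) := by
    rw [← integral_const_mul]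
    congr 1
    funext a
    ring
  rw [e1, integral_const_mul] at hz
  linarith

end GaussAux
namespace GaussAux

lemma gauss_pdf_eq {h : ℝ} (hh : 0 < h) :
    gaussianPDFReal 0 h.toNNReal
      = fun w => (Real.sqrt (2 * π * h))⁻¹ * Real.exp (-(2*h)⁻¹ * w ^ 2) := by
  funext w
  rw [gaussianPDFReal]
  rw [Real.coe_toNNReal h hh.le, sub_zero]
  congr 1
  field_simp

lemma toNNReal_ne_zero {h : ℝ} (hh : 0 < h) : h.toNNReal ≠ 0 := by
  simp only [ne_eq, Real.toNNReal_eq_zero, not_le]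
  exact hh

lemma gauss_measure_eq {h : ℝ} (hh : 0 < h) :
    gaussianReal 0 h.toNNReal
      = volume.withDensity (fun w => ((gaussianPDFReal 0 h.toNNReal w).toNNReal : ℝ≥0∞)) := by
  rw [gaussianReal_of_var_ne_zero 0 (toNNReal_ne_zero hh)]
  rfl

lemma gauss_integral_eq {h : ℝ} (hh : 0 < h) (g : ℝ → ℝ) :
    ∫ w, g w ∂(gaussianReal 0 h.toNNReal)
      = ∫ w, gaussianPDFReal 0 h.toNNReal w * g w := by
  rw [gauss_measure_eq hh,
    integral_withDensity_eq_integral_smul ((measurable_gaussianPDFReal 0 h.toNNReal).real_toNNReal) g]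
  congr 1
  funext w
  rw [NNReal.smul_def, smul_eq_mul, Real.coe_toNNReal _ (gaussianPDFReal_nonneg _ _ _)]

lemma gauss_integrable_iff {h : ℝ} (hh : 0 < h) (g : ℝ → ℝ) :
    Integrable g (gaussianReal 0 h.toNNReal)
      ↔ Integrable (fun w => gaussianPDFReal 0 h.toNNReal w * g w) volume := by
  rw [gauss_measure_eq hh]
  rw [integrable_withDensity_iff_integrable_smul ((measurable_gaussianPDFReal 0 h.toNNReal).real_toNNReal)]
  constructor <;> intro hI <;> refine hI.congr ?_ <;> filter_upwards with w <;>
    rw [NNReal.smul_def, smul_eq_mul, Real.coe_toNNReal _ (gaussianPDFReal_nonneg _ _ _)]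

lemma gauss_integrable_abs_pow {h : ℝ} (hh : 0 < h) (n : ℕ) :
    Integrable (fun w => |w| ^ n) (gaussianReal 0 h.toNNReal) := by
  rw [gauss_integrable_iff hh, gauss_pdf_eq hh]
  have hI := (integrable_abs_pow_mul_exp (bb := (2*h)⁻¹) (by positivity) n).const_mul
    (Real.sqrt (2*π*h))⁻¹
  refine hI.congr ?_
  filter_upwards with w
  ring

lemma gauss_integrable_pow {h : ℝ} (hh : 0 < h) (n : ℕ) :
    Integrable (fun w => w ^ n) (gaussianReal 0 h.toNNReal) := by
  refine (gauss_integrable_abs_pow hh n).mono' ?_ ?_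
  · exact (continuous_pow n).aestronglyMeasurable
  · filter_upwards with w
    rw [Real.norm_eq_abs, abs_pow]

lemma gauss_moment_eq {h : ℝ} (hh : 0 < h) (n : ℕ) :
    ∫ w, w ^ n ∂(gaussianReal 0 h.toNNReal)
      = (Real.sqrt (2 * π * h))⁻¹ * ∫ w, w ^ n * Real.exp (-(2*h)⁻¹ * w ^ 2) := by
  rw [gauss_integral_eq hh, gauss_pdf_eq hh, ← integral_const_mul]
  congr 1
  funext w
  ring

lemma gauss_moment_odd {h : ℝ} (hh : 0 < h) (k : ℕ) :
    ∫ w, w ^ (2*k+1) ∂(gaussianReal 0 h.toNNReal) = 0 := by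
  rw [gauss_moment_eq hh]
  have : ∫ w : ℝ, w ^ (2*k+1) * Real.exp (-(2*h)⁻¹ * w ^ 2) = 0 := by
    apply integral_odd_eq_zero
    intro x
    rw [neg_sq, pow_succ, pow_mul, neg_sq, ← pow_mul, pow_succ]
    ring
  rw [this, mul_zero]

lemma gauss_moment_rec {h : ℝ} (hh : 0 < h) (k : ℕ) :
    ∫ w, w ^ (k+2) ∂(gaussianReal 0 h.toNNReal)
      = (k+1 : ℝ) * h * ∫ w, w ^ k ∂(gaussianReal 0 h.toNNReal) := by
  rw [gauss_moment_eq hh, gauss_moment_eq hh]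
  have hrec := moment_rec (bb := (2*h)⁻¹) (by positivity) k
  have h2 : (2 : ℝ) * (2*h)⁻¹ = h⁻¹ := by field_simp
  rw [h2] at hrec
  have hne : h ≠ 0 := ne_of_gt hh
  set A := ∫ w : ℝ, w ^ (k+2) * Real.exp (-(2*h)⁻¹ * w ^ 2) with hA
  set B := ∫ w : ℝ, w ^ k * Real.exp (-(2*h)⁻¹ * w ^ 2) with hB
  have hAB : A = (k+1 : ℝ) * h * B := by
    have hh' : h⁻¹ * A = (k+1 : ℝ) * B := hrec
    have := congrArg (fun z => h * z) hh'
    simp only [← mul_assoc, mul_inv_cancel₀ hne, one_mul] at this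
    rw [this]
    ring
  rw [hAB]
  ring

lemma gauss_m0 {h : ℝ} (hh : 0 < h) :
    ∫ w, w ^ 0 ∂(gaussianReal 0 h.toNNReal) = 1 := by
  simp

lemma gauss_m1 {h : ℝ} (hh : 0 < h) :
    ∫ w, w ∂(gaussianReal 0 h.toNNReal) = 0 := by
  have := gauss_moment_odd hh 0
  simpa using this

lemma gauss_m2 {h : ℝ} (hh : 0 < h) :
    ∫ w, w ^ 2 ∂(gaussianReal 0 h.toNNReal) = h := by
  have := gauss_moment_rec hh 0
  rw [gauss_m0 hh] at this
  simpa using this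

lemma gauss_m3 {h : ℝ} (hh : 0 < h) :
    ∫ w, w ^ 3 ∂(gaussianReal 0 h.toNNReal) = 0 := by
  have := gauss_moment_odd hh 1
  simpa using this

lemma gauss_m4 {h : ℝ} (hh : 0 < h) :
    ∫ w, w ^ 4 ∂(gaussianReal 0 h.toNNReal) = 3 * h ^ 2 := by
  have := gauss_moment_rec hh 2
  rw [gauss_m2 hh] at this
  rw [show (4 : ℕ) = 2 + 2 from rfl, this]
  ring

lemma gauss_mabs1 {h : ℝ} (hh : 0 < h) :
    ∫ w, |w| ∂(gaussianReal 0 h.toNNReal) ≤ 1 + h := by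
  have hint1 : Integrable (fun w => |w|) (gaussianReal 0 h.toNNReal) := by
    simpa using gauss_integrable_abs_pow hh 1
  have hint2 : Integrable (fun w : ℝ => 1 + w ^ 2) (gaussianReal 0 h.toNNReal) :=
    (integrable_const 1).add (gauss_integrable_pow hh 2)
  have hmono := integral_mono hint1 hint2 (fun w => by
    nlinarith [sq_nonneg (|w| - 1), sq_abs w])
  rw [integral_add (integrable_const 1) (gauss_integrable_pow hh 2)] at hmono
  simpa [gauss_m2 hh] using hmono

end GaussAux
namespace GaussAux

lemma abs_sub_le_of_uIcc {y u s : ℝ} (hs : s ∈ uIcc y (y + u)) : |s - y| ≤ |u| := by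
  rcases mem_uIcc.mp hs with ⟨h1, h2⟩ | ⟨h1, h2⟩ <;>
    rw [abs_le] <;> constructor <;> linarith [le_abs_self u, neg_abs_le u]

/-- MVT: global derivative bound gives Lipschitz estimate. -/
lemma lip_of_deriv_bound (φ : ℝ → ℝ) (hφ : Differentiable ℝ φ) (K : ℝ)
    (hb : ∀ t, |deriv φ t| ≤ K) (s t : ℝ) : |φ s - φ t| ≤ K * |s - t| := by
  have := Convex.norm_image_sub_le_of_norm_deriv_le (𝕜 := ℝ) (s := (univ : Set ℝ))
    (fun x _ => hφ x) (fun x _ => by rw [Real.norm_eq_abs]; exact hb x)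
    convex_univ (mem_univ t) (mem_univ s)
  simpa [Real.norm_eq_abs] using this

lemma taylor1_bound (φ : ℝ → ℝ) (hφ : Differentiable ℝ φ) (K : ℝ) (hK : 0 ≤ K)
    (hLip : ∀ s t, |deriv φ s - deriv φ t| ≤ K * |s - t|) (y u : ℝ) :
    |φ (y + u) - φ y - deriv φ y * u| ≤ K * u ^ 2 := by
  set ψ : ℝ → ℝ := fun s => φ s - deriv φ y * s with hψ
  have hψd : ∀ s, HasDerivAt ψ (deriv φ s - deriv φ y) s := by
    intro s
    exact ((hφ s).hasDerivAt).sub (by simpa using (hasDerivAt_id s).const_mul (deriv φ y))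
  have hconv : Convex ℝ (uIcc y (y + u)) := convex_uIcc _ _
  have hbound : ∀ s ∈ uIcc y (y + u), ‖deriv φ s - deriv φ y‖ ≤ K * |u| := by
    intro s hs
    rw [Real.norm_eq_abs]
    exact le_trans (hLip s y) (mul_le_mul_of_nonneg_left (abs_sub_le_of_uIcc hs)
      hK)
  have := hconv.norm_image_sub_le_of_norm_hasDerivWithin_le
    (fun s hs => (hψd s).hasDerivWithinAt) hbound left_mem_uIcc right_mem_uIcc
  have he : ψ (y + u) - ψ y = φ (y + u) - φ y - deriv φ y * u := by
    simp only [hψ]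
    ring
  rw [he] at this
  rw [Real.norm_eq_abs, Real.norm_eq_abs] at this
  have h2 : |y + u - y| = |u| := by congr 1; ring
  rw [h2] at this
  calc |φ (y + u) - φ y - deriv φ y * u| ≤ K * |u| * |u| := this
    _ = K * u ^ 2 := by rw [mul_assoc, ← abs_mul, abs_mul_self, sq]

lemma taylor2_bound (f : ℝ → ℝ) (hd0 : Differentiable ℝ f) (hd1 : Differentiable ℝ (deriv f))
    (hd2 : Differentiable ℝ (deriv (deriv f))) (K : ℝ)
    (h3 : ∀ t, |deriv (deriv (deriv f)) t| ≤ K) (y u : ℝ) :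
    |f (y + u) - f y - deriv f y * u - deriv (deriv f) y * u ^ 2 / 2| ≤ K * |u| ^ 3 := by
  have hK : 0 ≤ K := le_trans (abs_nonneg _) (h3 0)
  have hLip2 : ∀ s t, |deriv (deriv f) s - deriv (deriv f) t| ≤ K * |s - t| :=
    lip_of_deriv_bound _ hd2 K h3
  have hT1 : ∀ z u', |deriv f (z + u') - deriv f z - deriv (deriv f) z * u'| ≤ K * u' ^ 2 :=
    taylor1_bound _ hd1 K hK hLip2
  set g : ℝ → ℝ := fun s => f (y + s) - f y - deriv f y * s - deriv (deriv f) y * s ^ 2 / 2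
    with hg
  have hgd : ∀ s, HasDerivAt g (deriv f (y + s) - deriv f y - deriv (deriv f) y * s) s := by
    intro s
    have h1 : HasDerivAt (fun s : ℝ => f (y + s)) (deriv f (y + s)) s := by
      have := ((hd0 (y + s)).hasDerivAt).comp s ((hasDerivAt_id s).const_add y)
      rw [mul_one] at this
      exact this
    have h2 : HasDerivAt (fun s : ℝ => f y) 0 s := hasDerivAt_const _ _
    have h3' : HasDerivAt (fun s : ℝ => deriv f y * s) (deriv f y) s := by
      simpa using (hasDerivAt_id s).const_mul (deriv f y)
    have h4 : HasDerivAt (fun s : ℝ => deriv (deriv f) y * s ^ 2 / 2)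
        (deriv (deriv f) y * s) s := by
      have h5 : HasDerivAt (fun s : ℝ => s ^ 2) (2 * s) s := by
        simpa using hasDerivAt_pow 2 s
      have := (h5.const_mul (deriv (deriv f) y)).div_const 2
      refine this.congr_deriv ?_
      ring
    have := ((h1.sub h2).sub h3').sub h4
    refine this.congr_deriv ?_
    ring
  have hconv : Convex ℝ (uIcc 0 u) := convex_uIcc _ _
  have hbound : ∀ s ∈ uIcc 0 u,
      ‖deriv f (y + s) - deriv f y - deriv (deriv f) y * s‖ ≤ K * u ^ 2 := by
    intro s hs
    rw [Real.norm_eq_abs]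
    refine le_trans (hT1 y s) ?_
    have hsu : |s| ≤ |u| := by
      have := abs_sub_le_of_uIcc (y := 0) (u := u) (by simpa using hs)
      simpa using this
    have : s ^ 2 ≤ u ^ 2 := by
      rw [← sq_abs s, ← sq_abs u]
      exact pow_le_pow_left₀ (abs_nonneg s) hsu 2
    nlinarith
  have hmvt := hconv.norm_image_sub_le_of_norm_hasDerivWithin_le
    (fun s _ => (hgd s).hasDerivWithinAt) hbound left_mem_uIcc right_mem_uIcc
  have hg0 : g 0 = 0 := by simp [hg]
  have hgu : g u = f (y + u) - f y - deriv f y * u - deriv (deriv f) y * u ^ 2 / 2 := rfl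
  rw [hg0, sub_zero, hgu, Real.norm_eq_abs, Real.norm_eq_abs, sub_zero] at hmvt
  calc |f (y + u) - f y - deriv f y * u - deriv (deriv f) y * u ^ 2 / 2|
      ≤ K * u ^ 2 * |u| := hmvt
    _ = K * |u| ^ 3 := by
        rw [← sq_abs u]
        ring

/-- Quadratic growth of a function with globally bounded second derivative. -/
lemma growth_bound (f : ℝ → ℝ) (hd0 : Differentiable ℝ f) (hd1 : Differentiable ℝ (deriv f))
    (M : ℝ) (h2 : ∀ t, |deriv (deriv f) t| ≤ M) (y : ℝ) :
    |f y| ≤ |f 0| + |deriv f 0| * |y| + M * y ^ 2 := by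
  have hM : 0 ≤ M := le_trans (abs_nonneg _) (h2 0)
  have hLip : ∀ s t, |deriv f s - deriv f t| ≤ M * |s - t| :=
    lip_of_deriv_bound _ hd1 M h2
  have hT1 := taylor1_bound f hd0 M hM hLip 0 y
  simp only [zero_add] at hT1
  have h1 : |f y| ≤ |f 0| + |deriv f 0 * y| + M * y ^ 2 := by
    have := abs_sub_abs_le_abs_sub (f y) (f 0 + deriv f 0 * y)
    have h2' : |f y - (f 0 + deriv f 0 * y)| ≤ M * y ^ 2 := by
      have : f y - (f 0 + deriv f 0 * y) = f y - f 0 - deriv f 0 * y := by ring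
      rw [this]
      exact hT1
    calc |f y| ≤ |f 0 + deriv f 0 * y| + |f y - (f 0 + deriv f 0 * y)| := by
          have := abs_add_le (f 0 + deriv f 0 * y) (f y - (f 0 + deriv f 0 * y))
          simpa using this
      _ ≤ (|f 0| + |deriv f 0 * y|) + M * y ^ 2 :=
          add_le_add (abs_add_le _ _) h2'
  rw [abs_mul] at h1
  linarith

end GaussAux
namespace GaussAux

lemma contDiff3_derivs (f : ℝ → ℝ) (hf : ContDiff ℝ 3 f) :
    Differentiable ℝ f ∧ Differentiable ℝ (deriv f) ∧ Differentiable ℝ (deriv (deriv f)) := by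
  have h0 : ContDiff ℝ ((2 : ℕ) + 1) f := by exact_mod_cast hf
  rw [contDiff_succ_iff_deriv] at h0
  have h1 : ContDiff ℝ ((1 : ℕ) + 1) (deriv f) := by exact_mod_cast h0.2.2
  rw [contDiff_succ_iff_deriv] at h1
  have h2 : ContDiff ℝ ((0 : ℕ) + 1) (deriv (deriv f)) := by exact_mod_cast h1.2.2
  rw [contDiff_succ_iff_deriv] at h2
  exact ⟨h0.1, h1.1, h2.1⟩

lemma neuron_integrable {h : ℝ} (hh : 0 < h)
    (f : ℝ → ℝ) (hd0 : Differentiable ℝ f) (hd1 : Differentiable ℝ (deriv f))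
    (M : ℝ) (hb2 : ∀ u, |deriv (deriv f) u| ≤ M) (c₀ c₁ : ℝ) :
    Integrable (fun w => f (c₀ + c₁ * w) * w) (gaussianReal 0 h.toNNReal) := by
  set A₀ := |f 0| with hA₀def
  set A₁ := |deriv f 0| with hA₁def
  have hM : 0 ≤ M := le_trans (abs_nonneg _) (hb2 0)
  have hgrowth : ∀ y, |f y| ≤ A₀ + A₁ * |y| + M * y ^ 2 :=
    growth_bound f hd0 hd1 M hb2
  have hdom : Integrable (fun w => (A₀ + A₁ * |c₀| + 2 * M * c₀ ^ 2) * |w| ^ 1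
      + (A₁ * |c₁|) * |w| ^ 2 + (2 * M * c₁ ^ 2) * |w| ^ 3) (gaussianReal 0 h.toNNReal) :=
    (((gauss_integrable_abs_pow hh 1).const_mul _).add
      ((gauss_integrable_abs_pow hh 2).const_mul _)).add
      ((gauss_integrable_abs_pow hh 3).const_mul _)
  refine hdom.mono' ?_ ?_
  · exact ((hd0.continuous.comp (continuous_const.add
      (continuous_const.mul continuous_id))).mul continuous_id).aestronglyMeasurable
  · filter_upwards with w
    rw [Real.norm_eq_abs, abs_mul]
    have h1 : |f (c₀ + c₁ * w)| ≤ A₀ + A₁ * |c₀ + c₁ * w| + M * (c₀ + c₁ * w) ^ 2 := hgrowth _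
    have h2 : |c₀ + c₁ * w| ≤ |c₀| + |c₁| * |w| :=
      le_trans (abs_add_le _ _) (by rw [abs_mul])
    have h3 : (c₀ + c₁ * w) ^ 2 ≤ 2 * c₀ ^ 2 + 2 * c₁ ^ 2 * w ^ 2 := by
      nlinarith [sq_nonneg (c₀ - c₁ * w)]
    have hw2 : w ^ 2 = |w| ^ 2 := (sq_abs w).symm
    have hA₀nn : 0 ≤ A₀ := abs_nonneg _
    have hA₁nn : 0 ≤ A₁ := abs_nonneg _
    have hfb : |f (c₀ + c₁ * w)| ≤ A₀ + A₁ * (|c₀| + |c₁| * |w|)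
        + M * (2 * c₀ ^ 2 + 2 * c₁ ^ 2 * |w| ^ 2) := by
      rw [← hw2]
      nlinarith [abs_nonneg (c₀ + c₁ * w)]
    calc |f (c₀ + c₁ * w)| * |w|
        ≤ (A₀ + A₁ * (|c₀| + |c₁| * |w|) + M * (2 * c₀ ^ 2 + 2 * c₁ ^ 2 * |w| ^ 2)) * |w| :=
          mul_le_mul_of_nonneg_right hfb (abs_nonneg w)
      _ = (A₀ + A₁ * |c₀| + 2 * M * c₀ ^ 2) * |w| ^ 1 + (A₁ * |c₁|) * |w| ^ 2
          + (2 * M * c₁ ^ 2) * |w| ^ 3 := by ring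

set_option maxHeartbeats 1000000 in
lemma neuron_estimate {h : ℝ} (hh : 0 < h) (hle : h ≤ 1)
    (f : ℝ → ℝ) (hd0 : Differentiable ℝ f) (hd1 : Differentiable ℝ (deriv f))
    (hd2 : Differentiable ℝ (deriv (deriv f))) (M : ℝ)
    (hb2 : ∀ u, |deriv (deriv f) u| ≤ M) (hb3 : ∀ u, |deriv (deriv (deriv f)) u| ≤ M)
    (t B S : ℝ) :
    |(1/h) * (∫ w, f (t + B * h + S * w) * w ∂(gaussianReal 0 h.toNNReal)) - S * deriv f t|
      ≤ M * (|B| * |S| + 12 * (|B| ^ 3 + |S| ^ 3)) * h := by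
  have hM : 0 ≤ M := le_trans (abs_nonneg _) (hb2 0)
  set γm := gaussianReal 0 h.toNNReal with hγm
  have hint : Integrable (fun w => f (t + B * h + S * w) * w) γm :=
    neuron_integrable hh f hd0 hd1 M hb2 (t + B * h) S
  set C1 := f t + deriv f t * (B * h) + deriv (deriv f) t * (B * h) ^ 2 / 2 with hC1
  set C2 := deriv f t * S + deriv (deriv f) t * (B * h * S) with hC2
  set C3 := deriv (deriv f) t * S ^ 2 / 2 with hC3
  have hI1 : Integrable (fun w : ℝ => C1 * w ^ 1) γm := (gauss_integrable_pow hh 1).const_mul _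
  have hI2 : Integrable (fun w : ℝ => C2 * w ^ 2) γm := (gauss_integrable_pow hh 2).const_mul _
  have hI3 : Integrable (fun w : ℝ => C3 * w ^ 3) γm := (gauss_integrable_pow hh 3).const_mul _
  have hI12 : Integrable (fun w : ℝ => C1 * w ^ 1 + C2 * w ^ 2) γm := by exact hI1.add hI2
  have hQint : Integrable (fun w => C1 * w ^ 1 + C2 * w ^ 2 + C3 * w ^ 3) γm := by
    exact hI12.add hI3
  have hQval : ∫ w, (C1 * w ^ 1 + C2 * w ^ 2 + C3 * w ^ 3) ∂γm = C2 * h := by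
    rw [integral_add hI12 hI3, integral_add hI1 hI2,
      integral_const_mul, integral_const_mul, integral_const_mul]
    have e1 : ∫ w, w ^ 1 ∂γm = 0 := by simp only [pow_one]; exact gauss_m1 hh
    rw [e1, gauss_m2 hh, gauss_m3 hh]
    ring
  set rem := fun w => f (t + B * h + S * w) * w - (C1 * w ^ 1 + C2 * w ^ 2 + C3 * w ^ 3)
    with hrem
  have hremint : Integrable rem γm := hint.sub hQint
  have hsplit : ∫ w, f (t + B * h + S * w) * w ∂γm = C2 * h + ∫ w, rem w ∂γm := by
    rw [hrem]
    rw [integral_sub hint hQint, hQval]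
    ring
  -- pointwise bound on rem
  have hrembound : ∀ w, |rem w| ≤ 4 * M * (|B| ^ 3 * h ^ 3 * |w| ^ 1 + |S| ^ 3 * |w| ^ 4) := by
    intro w
    have htay := taylor2_bound f hd0 hd1 hd2 M hb3 t (B * h + S * w)
    have he : rem w = (f (t + (B * h + S * w)) - f t - deriv f t * (B * h + S * w)
        - deriv (deriv f) t * (B * h + S * w) ^ 2 / 2) * w := by
      rw [hrem, ← add_assoc]
      simp only []
      ring
    rw [he, abs_mul]
    have habs : |B * h + S * w| ≤ |B| * h + |S| * |w| := by
      refine le_trans (abs_add_le _ _) ?_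
      rw [abs_mul, abs_mul, abs_of_pos hh]
    have hcube : |B * h + S * w| ^ 3 ≤ 4 * ((|B| * h) ^ 3 + (|S| * |w|) ^ 3) := by
      have h1 : |B * h + S * w| ^ 3 ≤ (|B| * h + |S| * |w|) ^ 3 :=
        pow_le_pow_left₀ (abs_nonneg _) habs 3
      have h2 : (|B| * h + |S| * |w|) ^ 3 ≤ 4 * ((|B| * h) ^ 3 + (|S| * |w|) ^ 3) := by
        have ha : 0 ≤ |B| * h := by positivity
        have hb' : 0 ≤ |S| * |w| := by positivity
        nlinarith [sq_nonneg (|B| * h - |S| * |w|), mul_nonneg ha hb',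
          mul_nonneg (mul_nonneg ha ha) hb', mul_nonneg (mul_nonneg hb' hb') ha]
      linarith
    calc |f (t + (B * h + S * w)) - f t - deriv f t * (B * h + S * w)
          - deriv (deriv f) t * (B * h + S * w) ^ 2 / 2| * |w|
        ≤ (M * |B * h + S * w| ^ 3) * |w| := mul_le_mul_of_nonneg_right htay (abs_nonneg w)
      _ ≤ (M * (4 * ((|B| * h) ^ 3 + (|S| * |w|) ^ 3))) * |w| := by
          apply mul_le_mul_of_nonneg_right _ (abs_nonneg w)
          exact mul_le_mul_of_nonneg_left hcube hM
      _ = 4 * M * (|B| ^ 3 * h ^ 3 * |w| ^ 1 + |S| ^ 3 * |w| ^ 4) := by ring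
  -- integral bound
  have hdomint : Integrable (fun w => 4 * M * (|B| ^ 3 * h ^ 3 * |w| ^ 1 + |S| ^ 3 * |w| ^ 4)) γm := by
    have hJ1 : Integrable (fun w : ℝ => |B| ^ 3 * h ^ 3 * |w| ^ 1) γm :=
      (gauss_integrable_abs_pow hh 1).const_mul _
    have hJ4 : Integrable (fun w : ℝ => |S| ^ 3 * |w| ^ 4) γm :=
      (gauss_integrable_abs_pow hh 4).const_mul _
    have : Integrable (fun w : ℝ => |B| ^ 3 * h ^ 3 * |w| ^ 1 + |S| ^ 3 * |w| ^ 4) γm := by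
      exact hJ1.add hJ4
    exact this.const_mul _
  have habs4 : ∫ w, |w| ^ 4 ∂γm = 3 * h ^ 2 := by
    have : (fun w : ℝ => |w| ^ 4) = fun w : ℝ => w ^ 4 := by
      funext w
      rw [← abs_pow, abs_of_nonneg (by positivity)]
    rw [this]
    exact gauss_m4 hh
  have habs1 : ∫ w, |w| ^ 1 ∂γm ≤ 1 + h := by
    simpa using gauss_mabs1 hh
  have hremval : |∫ w, rem w ∂γm| ≤ 4 * M * (2 * |B| ^ 3 + 3 * |S| ^ 3) * h ^ 2 := by
    have h1 : |∫ w, rem w ∂γm| ≤ ∫ w, |rem w| ∂γm := by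
      simpa [Real.norm_eq_abs] using norm_integral_le_integral_norm (μ := γm) rem
    have h2 : ∫ w, |rem w| ∂γm ≤ ∫ w, 4 * M * (|B| ^ 3 * h ^ 3 * |w| ^ 1 + |S| ^ 3 * |w| ^ 4) ∂γm :=
      integral_mono hremint.abs hdomint (fun w => hrembound w)
    have h3 : ∫ w, 4 * M * (|B| ^ 3 * h ^ 3 * |w| ^ 1 + |S| ^ 3 * |w| ^ 4) ∂γm
        = 4 * M * (|B| ^ 3 * h ^ 3 * ∫ w, |w| ^ 1 ∂γm) + 4 * M * (|S| ^ 3 * (3 * h ^ 2)) := by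
      have hJ1 : Integrable (fun w : ℝ => |B| ^ 3 * h ^ 3 * |w| ^ 1) γm :=
        (gauss_integrable_abs_pow hh 1).const_mul _
      have hJ4 : Integrable (fun w : ℝ => |S| ^ 3 * |w| ^ 4) γm :=
        (gauss_integrable_abs_pow hh 4).const_mul _
      rw [integral_const_mul, integral_add hJ1 hJ4, integral_const_mul, integral_const_mul,
        habs4]
      ring
    have h4 : 4 * M * (|B| ^ 3 * h ^ 3 * ∫ w, |w| ^ 1 ∂γm) ≤ 4 * M * (|B| ^ 3 * h ^ 3 * 2) := by
      have hint1 : (0:ℝ) ≤ ∫ w, |w| ^ 1 ∂γm :=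
        integral_nonneg (fun w => by positivity)
      have : (∫ w, |w| ^ 1 ∂γm) ≤ 2 := by linarith
      have hc : (0:ℝ) ≤ 4 * M * (|B| ^ 3 * h ^ 3) := by positivity
      calc 4 * M * (|B| ^ 3 * h ^ 3 * ∫ w, |w| ^ 1 ∂γm)
          = (4 * M * (|B| ^ 3 * h ^ 3)) * ∫ w, |w| ^ 1 ∂γm := by ring
        _ ≤ (4 * M * (|B| ^ 3 * h ^ 3)) * 2 := mul_le_mul_of_nonneg_left this hc
        _ = 4 * M * (|B| ^ 3 * h ^ 3 * 2) := by ring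
    have hh3 : h ^ 3 ≤ h ^ 2 := by nlinarith
    calc |∫ w, rem w ∂γm| ≤ 4 * M * (|B| ^ 3 * h ^ 3 * 2) + 4 * M * (|S| ^ 3 * (3 * h ^ 2)) := by
          rw [h3] at h2
          linarith
      _ ≤ 4 * M * (2 * |B| ^ 3 + 3 * |S| ^ 3) * h ^ 2 := by
          have hkey : 0 ≤ M * |B| ^ 3 * (h ^ 2 - h ^ 3) :=
            mul_nonneg (mul_nonneg hM (pow_nonneg (abs_nonneg B) 3)) (by linarith)
          nlinarith [hkey]
  -- assemble
  have hC2h : (1/h) * (C2 * h) = C2 := by field_simp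
  have hmain : (1/h) * (∫ w, f (t + B * h + S * w) * w ∂γm) - S * deriv f t
      = deriv (deriv f) t * (B * S) * h + (1/h) * ∫ w, rem w ∂γm := by
    rw [hsplit, mul_add, hC2h, hC2]
    ring
  rw [hmain]
  have hb2t := hb2 t
  have e1 : |deriv (deriv f) t * (B * S) * h| ≤ M * (|B| * |S|) * h := by
    rw [abs_mul, abs_mul, abs_mul, abs_of_pos hh]
    apply mul_le_mul_of_nonneg_right _ hh.le
    exact mul_le_mul_of_nonneg_right hb2t (by positivity)
  have e2 : |(1/h) * ∫ w, rem w ∂γm| ≤ 4 * M * (2 * |B| ^ 3 + 3 * |S| ^ 3) * h := by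
    rw [abs_mul, abs_of_pos (by positivity : (0:ℝ) < 1/h)]
    calc (1/h) * |∫ w, rem w ∂γm| ≤ (1/h) * (4 * M * (2 * |B| ^ 3 + 3 * |S| ^ 3) * h ^ 2) := by
          apply mul_le_mul_of_nonneg_left hremval (by positivity)
      _ = 4 * M * (2 * |B| ^ 3 + 3 * |S| ^ 3) * h := by field_simp
  calc |deriv (deriv f) t * (B * S) * h + (1/h) * ∫ w, rem w ∂γm|
      ≤ |deriv (deriv f) t * (B * S) * h| + |(1/h) * ∫ w, rem w ∂γm| := abs_add_le _ _
    _ ≤ M * (|B| * |S|) * h + 4 * M * (2 * |B| ^ 3 + 3 * |S| ^ 3) * h := add_le_add e1 e2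
    _ ≤ M * (|B| * |S| + 12 * (|B| ^ 3 + |S| ^ 3)) * h := by
        nlinarith [mul_nonneg (mul_nonneg hM (pow_nonneg (abs_nonneg B) 3)) hh.le]

end GaussAux


open GaussAux

set_option maxHeartbeats 1000000 in
/-- Automatic-differentiation approximation error for constrained one-hidden-layer
networks: there is a constant `C > 0` depending only on `b` and `σ` such that for
every activation `ρ` of class `C³` with second and third derivatives bounded by `M`,
every `γ ≥ 1`, and every network `U(x) = ∑ i, c i * ρ (a i * x + β i) + b0` with
weights satisfying `max |a i| ≤ γ` and `∑ |c i| ≤ γ`, one has, for every `x ∈ ℝ`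
and `h ∈ (0, 1]`,
`|(1/h) ∫ U(x + b h + σ w) w dγ_h(w) − σ U'(x)| ≤ C M (γ³ + γ⁴) h`,
where `γ_h` is the Gaussian measure on `ℝ` with mean `0` and variance `h`. -/
theorem gaussian_autodiff_network_estimate (b σ : ℝ) :
    ∃ C > (0 : ℝ), ∀ (M : ℝ) (ρ : ℝ → ℝ), ContDiff ℝ 3 ρ →
      (∀ t : ℝ, |iteratedDeriv 2 ρ t| ≤ M) →
      (∀ t : ℝ, |iteratedDeriv 3 ρ t| ≤ M) →
      ∀ γ : ℝ, 1 ≤ γ →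
      ∀ (m : ℕ) (a β c : Fin m → ℝ) (b0 : ℝ),
        (∀ i, |a i| ≤ γ) → (∑ i, |c i| ≤ γ) →
      ∀ U : ℝ → ℝ, U = (fun x => ∑ i, c i * ρ (a i * x + β i) + b0) →
      ∀ (x h : ℝ), 0 < h → h ≤ 1 →
        |(1 / h) * (∫ w, U (x + b * h + σ * w) * w ∂(gaussianReal 0 h.toNNReal))
            - σ * deriv U x|
          ≤ C * M * (γ ^ 3 + γ ^ 4) * h := by
  set C₀ : ℝ := |b| * |σ| + 12 * (|b| ^ 3 + |σ| ^ 3) with hC₀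
  have hC₀nn : 0 ≤ C₀ := by positivity
  refine ⟨C₀ + 1, by positivity, ?_⟩
  intro M ρ hρ hit2 hit3 γ hγ m a β c b0 ha hc U hU x h hh hle
  have hiter2 : iteratedDeriv 2 ρ = deriv (deriv ρ) := by
    rw [show (2:ℕ) = 1 + 1 from rfl, iteratedDeriv_succ, iteratedDeriv_one]
  have hiter3 : iteratedDeriv 3 ρ = deriv (deriv (deriv ρ)) := by
    rw [show (3:ℕ) = 2 + 1 from rfl, iteratedDeriv_succ, hiter2]
  have hb2 : ∀ u, |deriv (deriv ρ) u| ≤ M := by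
    intro u; have := hit2 u; rwa [hiter2] at this
  have hb3 : ∀ u, |deriv (deriv (deriv ρ)) u| ≤ M := by
    intro u; have := hit3 u; rwa [hiter3] at this
  have hM : 0 ≤ M := le_trans (abs_nonneg _) (hb2 0)
  obtain ⟨hd0, hd1, hd2⟩ := contDiff3_derivs ρ hρ
  subst hU
  set γm := gaussianReal 0 h.toNNReal with hγm
  set g : Fin m → ℝ → ℝ :=
    fun i w => ρ ((a i * x + β i) + (a i * b) * h + (a i * σ) * w) * w with hg
  have hgint : ∀ i, Integrable (g i) γm := by
    intro i
    exact neuron_integrable hh ρ hd0 hd1 M hb2 ((a i * x + β i) + (a i * b) * h) (a i * σ)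
  -- derivative of the network
  have hder : deriv (fun x => ∑ i, c i * ρ (a i * x + β i) + b0) x
      = ∑ i, c i * (deriv ρ (a i * x + β i) * a i) := by
    have hterm : ∀ i : Fin m, HasDerivAt (fun x => c i * ρ (a i * x + β i))
        (c i * (deriv ρ (a i * x + β i) * a i)) x := by
      intro i
      have hinner : HasDerivAt (fun x : ℝ => a i * x + β i) (a i) x := by
        simpa using ((hasDerivAt_id x).const_mul (a i)).add_const (β i)
      exact (((hd0 (a i * x + β i)).hasDerivAt.comp x hinner).const_mul (c i))
    have hsum : HasDerivAt (fun x => ∑ i, c i * ρ (a i * x + β i))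
        (∑ i, c i * (deriv ρ (a i * x + β i) * a i)) x :=
      HasDerivAt.fun_sum (fun i _ => hterm i)
    exact (hsum.add_const b0).deriv
  -- decompose the integral
  have hbw : Integrable (fun w : ℝ => b0 * w) γm := by
    have := (gauss_integrable_pow hh 1).const_mul b0
    simpa using this
  have hsumint : Integrable (fun w => ∑ i, c i * g i w) γm :=
    integrable_finset_sum _ (fun i _ => (hgint i).const_mul _)
  have hpoint : ∀ w : ℝ, (∑ i, c i * ρ (a i * (x + b * h + σ * w) + β i) + b0) * w
      = (∑ i, c i * g i w) + b0 * w := by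
    intro w
    rw [add_mul, Finset.sum_mul]
    congr 1
    apply Finset.sum_congr rfl
    intro i _
    have harg : a i * (x + b * h + σ * w) + β i
        = (a i * x + β i) + (a i * b) * h + (a i * σ) * w := by ring
    rw [hg, harg]
    ring
  have hIeq : ∫ w, (fun x => ∑ i, c i * ρ (a i * x + β i) + b0) (x + b * h + σ * w) * w ∂γm
      = ∑ i, c i * ∫ w, g i w ∂γm := by
    have step1 : ∫ w, (fun x => ∑ i, c i * ρ (a i * x + β i) + b0) (x + b * h + σ * w) * w ∂γm
        = ∫ w, ((∑ i, c i * g i w) + b0 * w) ∂γm := by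
      apply integral_congr_ae
      filter_upwards with w
      exact hpoint w
    rw [step1, integral_add hsumint hbw, integral_finset_sum _ (fun i _ => (hgint i).const_mul _)]
    have hb0 : ∫ w, b0 * w ∂γm = 0 := by
      rw [integral_const_mul, gauss_m1 hh, mul_zero]
    rw [hb0, add_zero]
    apply Finset.sum_congr rfl
    intro i _
    rw [integral_const_mul]
  rw [hIeq, hder]
  -- rewrite difference as a sum
  have hdiff : (1 / h) * (∑ i, c i * ∫ w, g i w ∂γm)
      - σ * ∑ i, c i * (deriv ρ (a i * x + β i) * a i)
      = ∑ i, c i * ((1 / h) * (∫ w, g i w ∂γm) - (a i * σ) * deriv ρ (a i * x + β i)) := by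
    rw [Finset.mul_sum, Finset.mul_sum, ← Finset.sum_sub_distrib]
    apply Finset.sum_congr rfl
    intro i _
    ring
  rw [hdiff]
  -- per-neuron bound
  have hγ3 : (0:ℝ) ≤ γ ^ 3 := by positivity
  have hDbound : ∀ i : Fin m,
      |(1 / h) * (∫ w, g i w ∂γm) - (a i * σ) * deriv ρ (a i * x + β i)|
        ≤ M * C₀ * γ ^ 3 * h := by
    intro i
    have hest := neuron_estimate hh hle ρ hd0 hd1 hd2 M hb2 hb3
      (a i * x + β i) (a i * b) (a i * σ)
    refine le_trans hest ?_
    have h1 : |a i| ≤ γ := ha i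
    have hp2 : |a i| ^ 2 ≤ γ ^ 2 := pow_le_pow_left₀ (abs_nonneg _) h1 2
    have hp3 : |a i| ^ 3 ≤ γ ^ 3 := pow_le_pow_left₀ (abs_nonneg _) h1 3
    have hγ23 : γ ^ 2 ≤ γ ^ 3 := pow_le_pow_right₀ hγ (by norm_num)
    have key : |a i * b| * |a i * σ| + 12 * (|a i * b| ^ 3 + |a i * σ| ^ 3) ≤ C₀ * γ ^ 3 := by
      rw [abs_mul, abs_mul, mul_pow, mul_pow, hC₀]
      have k1 : |a i| ^ 2 * (|b| * |σ|) ≤ γ ^ 3 * (|b| * |σ|) :=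
        mul_le_mul_of_nonneg_right (hp2.trans hγ23) (by positivity)
      have k2 : |a i| ^ 3 * |b| ^ 3 ≤ γ ^ 3 * |b| ^ 3 :=
        mul_le_mul_of_nonneg_right hp3 (by positivity)
      have k3 : |a i| ^ 3 * |σ| ^ 3 ≤ γ ^ 3 * |σ| ^ 3 :=
        mul_le_mul_of_nonneg_right hp3 (by positivity)
      nlinarith [k1, k2, k3]
    calc M * (|a i * b| * |a i * σ| + 12 * (|a i * b| ^ 3 + |a i * σ| ^ 3)) * h
        ≤ M * (C₀ * γ ^ 3) * h := by
          apply mul_le_mul_of_nonneg_right _ hh.le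
          exact mul_le_mul_of_nonneg_left key hM
      _ = M * C₀ * γ ^ 3 * h := by ring
  -- sum up
  have hsum1 : |∑ i, c i * ((1 / h) * (∫ w, g i w ∂γm) - (a i * σ) * deriv ρ (a i * x + β i))|
      ≤ ∑ i, |c i| * (M * C₀ * γ ^ 3 * h) := by
    refine le_trans (Finset.abs_sum_le_sum_abs _ _) ?_
    apply Finset.sum_le_sum
    intro i _
    rw [abs_mul]
    exact mul_le_mul_of_nonneg_left (hDbound i) (abs_nonneg _)
  have hsum2 : ∑ i, |c i| * (M * C₀ * γ ^ 3 * h) = (∑ i, |c i|) * (M * C₀ * γ ^ 3 * h) :=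
    (Finset.sum_mul _ _ _).symm
  have hsum3 : (∑ i, |c i|) * (M * C₀ * γ ^ 3 * h) ≤ γ * (M * C₀ * γ ^ 3 * h) :=
    mul_le_mul_of_nonneg_right hc (by positivity)
  have hfinal : γ * (M * C₀ * γ ^ 3 * h) ≤ (C₀ + 1) * M * (γ ^ 3 + γ ^ 4) * h := by
    have e1 : γ * (M * C₀ * γ ^ 3 * h) = C₀ * M * γ ^ 4 * h := by ring
    rw [e1]
    have hγ4 : (0:ℝ) ≤ γ ^ 4 := by positivity
    nlinarith [mul_nonneg (mul_nonneg hM hγ3) hh.le, mul_nonneg (mul_nonneg hM hγ4) hh.le,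
      mul_nonneg (mul_nonneg (mul_nonneg hC₀nn hM) hγ3) hh.le]
  calc |∑ i, c i * ((1 / h) * (∫ w, g i w ∂γm) - (a i * σ) * deriv ρ (a i * x + β i))|
      ≤ ∑ i, |c i| * (M * C₀ * γ ^ 3 * h) := hsum1
    _ = (∑ i, |c i|) * (M * C₀ * γ ^ 3 * h) := hsum2
    _ ≤ γ * (M * C₀ * γ ^ 3 * h) := hsum3
    _ ≤ (C₀ + 1) * M * (γ ^ 3 + γ ^ 4) * h := hfinal
end

section
/- Let (Ω, F, P) be a probability space, G a sub-σ-algebra of F, h > 0 and d ≥ 1. Let W : Ω → ℝ^d be F-measurable with ‖W‖ square integrable, with conditional expectation E[W_j | G] = 0 almost surely for each coordinate j = 1,…,d, and with E[‖W‖² | G] = d·h almost surely. Let A : Ω → ℝ be square integrable, and define Z_j := (1/h)·E[W_j · A | G] for j = 1,…,d. Then h · E[Σ_{j=1}^d Z_j²] ≤ d · ( E[A²] − E[(E[A | G])²] ). -/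
open MeasureTheory

private lemma mul_int_of_L2 {Ω : Type*} {mΩ : MeasurableSpace Ω} {P : Measure Ω}
    {f g : Ω → ℝ} (hf : MemLp f 2 P) (hg : MemLp g 2 P) :
    Integrable (fun ω => f ω * g ω) P := by
  have h := hg.smul hf (p := 2) (q := 2) (r := 1)
  rw [memLp_one_iff_integrable] at h
  exact h

private lemma sq_le_of_forall_rat {a b c : ℝ}
    (hq : ∀ q : ℚ, 0 ≤ a * (q : ℝ) ^ 2 + 2 * b * (q : ℝ) + c) : b ^ 2 ≤ a * c := by
  have hreal : ∀ t : ℝ, 0 ≤ a * t ^ 2 + 2 * b * t + c := by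
    have hcl : IsClosed {t : ℝ | 0 ≤ a * t ^ 2 + 2 * b * t + c} :=
      isClosed_le continuous_const (by continuity)
    have hsub : Set.range ((↑) : ℚ → ℝ) ⊆ {t : ℝ | 0 ≤ a * t ^ 2 + 2 * b * t + c} := by
      rintro _ ⟨q, rfl⟩; exact hq q
    intro t
    exact closure_minimal hsub hcl (Rat.denseRange_cast t)
  have hd : discrim a (2 * b) c ≤ 0 := by
    apply discrim_le_zero
    intro x
    have := hreal x
    nlinarith
  rw [discrim] at hd
  nlinarith

private lemma condexp_CS {Ω : Type*} {m0 : MeasurableSpace Ω} {P : Measure Ω}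
    [IsProbabilityMeasure P] {G : MeasurableSpace Ω} (hG : G ≤ m0)
    {X Y : Ω → ℝ} (hX : MemLp X 2 P) (hY : MemLp Y 2 P) :
    ∀ᵐ ω ∂P, ((P[fun ω' => X ω' * Y ω'|G]) ω) ^ 2
      ≤ (P[fun ω' => X ω' ^ 2|G]) ω * (P[fun ω' => Y ω' ^ 2|G]) ω := by
  letI : MeasurableSpace Ω := m0
  have hXY : Integrable (fun ω => X ω * Y ω) P := mul_int_of_L2 hX hY
  have hX2 := hX.integrable_sq
  have hY2 := hY.integrable_sq
  have key : ∀ q : ℚ, ∀ᵐ ω ∂P,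
      0 ≤ (P[fun ω' => X ω' ^ 2|G]) ω * (q : ℝ) ^ 2
        + 2 * (P[fun ω' => X ω' * Y ω'|G]) ω * (q : ℝ)
        + (P[fun ω' => Y ω' ^ 2|G]) ω := by
    intro q
    have hq2X : Integrable (((q : ℝ) ^ 2) • fun ω => X ω ^ 2) P := hX2.smul _
    have hqXY : Integrable ((2 * (q : ℝ)) • fun ω => X ω * Y ω) P := hXY.smul _
    have e : (fun ω => ((q : ℝ) * X ω + Y ω) ^ 2)
        = ((((q : ℝ) ^ 2) • fun ω => X ω ^ 2) + ((2 * (q : ℝ)) • fun ω => X ω * Y ω))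
          + fun ω => Y ω ^ 2 := by
      funext ω
      simp only [Pi.add_apply, Pi.smul_apply, smul_eq_mul]
      ring
    have h5 : (0 : Ω → ℝ) ≤ᵐ[P] P[fun ω => ((q : ℝ) * X ω + Y ω) ^ 2|G] :=
      condExp_nonneg (ae_of_all P fun ω => sq_nonneg _)
    rw [e] at h5
    have h1 := condExp_add (μ := P) (m := G) (hq2X.add hqXY) hY2
    have h2 := condExp_add (μ := P) (m := G) hq2X hqXY
    have h3 := condExp_smul (μ := P) (m := G) ((q : ℝ) ^ 2) (fun ω => X ω ^ 2)
    have h4 := condExp_smul (μ := P) (m := G) (2 * (q : ℝ)) (fun ω => X ω * Y ω)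
    filter_upwards [h1, h2, h3, h4, h5] with ω e1 e2 e3 e4 e5
    simp only [Pi.add_apply, Pi.smul_apply, smul_eq_mul, Pi.zero_apply] at e1 e2 e3 e4 e5
    rw [e1, e2, e3, e4] at e5
    linarith
  filter_upwards [ae_all_iff.2 key] with ω hω
  have := sq_le_of_forall_rat (a := (P[fun ω' => X ω' ^ 2|G]) ω)
    (b := (P[fun ω' => X ω' * Y ω'|G]) ω) (c := (P[fun ω' => Y ω' ^ 2|G]) ω) hω
  linarith

/-- Conditional Cauchy–Schwarz estimate: if `W : Ω → ℝ^d` is square integrable with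
`E[W_j | G] = 0` a.s. for each coordinate and `E[‖W‖² | G] = d h` a.s., and
`A : Ω → ℝ` is square integrable, then the variables `Z_j = (1/h) E[W_j A | G]`
satisfy `h E[∑ j, Z_j²] ≤ d (E[A²] − E[(E[A | G])²])`. -/
theorem conditional_cauchy_schwarz_Z_bound
    {Ω : Type*} [m0 : MeasurableSpace Ω] (P : Measure Ω) [IsProbabilityMeasure P]
    (G : MeasurableSpace Ω) (hG : G ≤ m0)
    (h : ℝ) (hh : 0 < h) (d : ℕ) (hd : 1 ≤ d)
    (W : Ω → EuclideanSpace ℝ (Fin d)) (hW : MemLp W 2 P)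
    (hW0 : ∀ j : Fin d, P[fun ω => W ω j | G] =ᵐ[P] 0)
    (hWvar : P[fun ω => ‖W ω‖ ^ 2 | G] =ᵐ[P] fun _ => (d : ℝ) * h)
    (A : Ω → ℝ) (hA : MemLp A 2 P)
    (Z : Fin d → Ω → ℝ)
    (hZ : ∀ j, Z j = fun ω => (1 / h) * (P[fun ω' => W ω' j * A ω' | G]) ω) :
    h * ∫ ω, ∑ j, (Z j ω) ^ 2 ∂P
      ≤ d * ((∫ ω, (A ω) ^ 2 ∂P) - ∫ ω, ((P[A | G]) ω) ^ 2 ∂P) := by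
  letI : MeasurableSpace Ω := m0
  set g : Ω → ℝ := P[A|G] with hgdef
  have hgm : StronglyMeasurable[G] g := stronglyMeasurable_condExp
  have hgsm : AEStronglyMeasurable g P := (hgm.mono hG).aestronglyMeasurable
  have hAsq := hA.integrable_sq
  -- g is in L²
  have hg_sq_le : ∀ᵐ ω ∂P, (g ω) ^ 2 ≤ (P[fun ω' => A ω' ^ 2|G]) ω := by
    have hcs := condexp_CS hG hA (memLp_const (1 : ℝ))
    have e1 : (fun ω' => A ω' * (1 : ℝ)) = A := by funext ω; simp
    have e2 : (fun _ : Ω => (1 : ℝ) ^ 2) = fun _ => (1 : ℝ) := by funext ω; simp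
    rw [e1, e2, condExp_const hG (1 : ℝ)] at hcs
    filter_upwards [hcs] with ω hω
    simpa using hω
  have hg2 : MemLp g 2 P := by
    rw [memLp_two_iff_integrable_sq hgsm]
    refine (integrable_condExp (m := G) (μ := P) (f := fun ω' => A ω' ^ 2)).mono' ?_ ?_
    · exact hgsm.pow 2
    · filter_upwards [hg_sq_le] with ω hω
      simpa [abs_of_nonneg (sq_nonneg (g ω))] using hω
  set B : Ω → ℝ := fun ω => A ω - g ω with hBdef
  have hB : MemLp B 2 P := hA.sub hg2
  have hB2int := hB.integrable_sq
  -- coordinates of W are in L²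
  have hWj : ∀ j, MemLp (fun ω => W ω j) 2 P := by
    intro j
    have := (EuclideanSpace.proj (𝕜 := ℝ) j).comp_memLp' hW
    exact this
  -- replace A by B inside the conditional expectations
  have hker : ∀ j, P[fun ω' => W ω' j * A ω'|G] =ᵐ[P] P[fun ω' => W ω' j * B ω'|G] := by
    intro j
    have hWB : Integrable (fun ω' => W ω' j * B ω') P := mul_int_of_L2 (hWj j) hB
    have hgW : Integrable (fun ω' => g ω' * W ω' j) P := mul_int_of_L2 hg2 (hWj j)
    have e : (fun ω' => W ω' j * A ω')
        = (fun ω' => W ω' j * B ω') + fun ω' => g ω' * W ω' j := by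
      funext ω; simp only [Pi.add_apply, hBdef]; ring
    rw [e]
    have h1 := condExp_add (μ := P) (m := G) hWB hgW
    have h2 : P[fun ω' => g ω' * W ω' j|G] =ᵐ[P] fun ω' => g ω' * (P[fun ω'' => W ω'' j|G]) ω' :=
      condExp_mul_of_stronglyMeasurable_left hgm hgW ((hWj j).integrable one_le_two)
    have h3 : (fun ω' => g ω' * (P[fun ω'' => W ω'' j|G]) ω') =ᵐ[P] (0 : Ω → ℝ) := by
      filter_upwards [hW0 j] with ω hω
      simp [hω]
    refine h1.trans ?_
    have := (h2.trans h3)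
    filter_upwards [this] with ω hω
    simp only [Pi.add_apply, hω, Pi.zero_apply, add_zero]
  -- conditional Cauchy-Schwarz for each coordinate
  have hCSj : ∀ j, ∀ᵐ ω ∂P, ((P[fun ω' => W ω' j * A ω'|G]) ω) ^ 2
      ≤ (P[fun ω' => (W ω' j) ^ 2|G]) ω * (P[fun ω' => B ω' ^ 2|G]) ω := by
    intro j
    filter_upwards [hker j, condexp_CS hG (hWj j) hB] with ω h1 h2
    rw [h1]; exact h2
  -- sum of conditional variances equals d * h
  have e : (fun ω => ‖W ω‖ ^ 2) = ∑ j, fun ω => (W ω j) ^ 2 := by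
    funext ω
    rw [Finset.sum_apply, EuclideanSpace.norm_eq, Real.sq_sqrt (by positivity)]
    simp [Real.norm_eq_abs, sq_abs]
  have h6 := condExp_finsetSum (μ := P) (m := G) (s := Finset.univ)
    (f := fun j => fun ω' => (W ω' j) ^ 2) (fun j _ => (hWj j).integrable_sq)
  rw [← e] at h6
  have hsumW : (∑ j, P[fun ω' => (W ω' j) ^ 2|G]) =ᵐ[P] fun _ => (d : ℝ) * h :=
    h6.symm.trans hWvar
  -- combined pointwise bound
  have hsum : ∀ᵐ ω ∂P, ∑ j, ((P[fun ω' => W ω' j * A ω'|G]) ω) ^ 2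
      ≤ (d : ℝ) * h * (P[fun ω' => B ω' ^ 2|G]) ω := by
    have hc0 : (0 : Ω → ℝ) ≤ᵐ[P] P[fun ω' => B ω' ^ 2|G] :=
      condExp_nonneg (ae_of_all P fun ω => sq_nonneg _)
    filter_upwards [ae_all_iff.2 hCSj, hsumW, hc0] with ω h1 h2 h3
    simp only [Finset.sum_apply] at h2
    calc ∑ j, ((P[fun ω' => W ω' j * A ω'|G]) ω) ^ 2
        ≤ ∑ j, (P[fun ω' => (W ω' j) ^ 2|G]) ω * (P[fun ω' => B ω' ^ 2|G]) ω :=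
          Finset.sum_le_sum fun j _ => h1 j
      _ = (∑ j, (P[fun ω' => (W ω' j) ^ 2|G]) ω) * (P[fun ω' => B ω' ^ 2|G]) ω := by
          rw [Finset.sum_mul]
      _ = (d : ℝ) * h * (P[fun ω' => B ω' ^ 2|G]) ω := by rw [h2]
  -- integral estimate
  have hZsum : (fun ω => ∑ j, (Z j ω) ^ 2)
      = fun ω => (1 / h ^ 2) * ∑ j, ((P[fun ω' => W ω' j * A ω'|G]) ω) ^ 2 := by
    funext ω
    simp only [hZ]
    rw [Finset.mul_sum]
    refine Finset.sum_congr rfl fun j _ => by ring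
  have hle : ∫ ω, ∑ j, (Z j ω) ^ 2 ∂P
      ≤ ∫ ω, (1 / h ^ 2) * ((d : ℝ) * h * (P[fun ω' => B ω' ^ 2|G]) ω) ∂P := by
    rw [hZsum]
    refine integral_mono_of_nonneg (ae_of_all P fun ω => by positivity)
      ((integrable_condExp.const_mul ((d : ℝ) * h)).const_mul (1 / h ^ 2)) ?_
    filter_upwards [hsum] with ω hω
    exact mul_le_mul_of_nonneg_left hω (by positivity)
  have hintc : ∫ ω, (P[fun ω' => B ω' ^ 2|G]) ω ∂P = ∫ ω, B ω ^ 2 ∂P :=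
    integral_condExp hG
  have hval : ∫ ω, (1 / h ^ 2) * ((d : ℝ) * h * (P[fun ω' => B ω' ^ 2|G]) ω) ∂P
      = (1 / h ^ 2) * ((d : ℝ) * h * ∫ ω, B ω ^ 2 ∂P) := by
    rw [integral_const_mul, integral_const_mul, hintc]
  -- value of ∫ B²
  have hAg : Integrable (fun ω => g ω * A ω) P := mul_int_of_L2 hg2 hA
  have hgsq : Integrable (fun ω => g ω ^ 2) P := hg2.integrable_sq
  have hintAg : ∫ ω, g ω * A ω ∂P = ∫ ω, g ω ^ 2 ∂P := by
    have h1 := integral_condExp (μ := P) (f := fun ω => g ω * A ω) hG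
    have h2 : P[fun ω => g ω * A ω|G] =ᵐ[P] fun ω => g ω * (P[A|G]) ω :=
      condExp_mul_of_stronglyMeasurable_left hgm hAg (hA.integrable one_le_two)
    rw [← h1, integral_congr_ae h2]
    refine integral_congr_ae (ae_of_all P fun ω => ?_)
    rw [← hgdef]; ring
  have hBsq : ∫ ω, B ω ^ 2 ∂P = ∫ ω, A ω ^ 2 ∂P - ∫ ω, g ω ^ 2 ∂P := by
    have e2 : (fun ω => B ω ^ 2) = fun ω => (A ω ^ 2 - 2 * (g ω * A ω)) + g ω ^ 2 := by
      funext ω; simp only [hBdef]; ring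
    have hf' : Integrable (fun ω => A ω ^ 2 - 2 * (g ω * A ω)) P := hAsq.sub (hAg.const_mul 2)
    rw [e2, integral_add hf' hgsq, integral_sub hAsq (hAg.const_mul 2),
      integral_const_mul, hintAg]
    ring
  have hfinal : h * ∫ ω, ∑ j, (Z j ω) ^ 2 ∂P
      ≤ h * ((1 / h ^ 2) * ((d : ℝ) * h * ∫ ω, B ω ^ 2 ∂P)) := by
    rw [← hval]
    exact mul_le_mul_of_nonneg_left hle hh.le
  have : h * ((1 / h ^ 2) * ((d : ℝ) * h * ∫ ω, B ω ^ 2 ∂P)) = (d : ℝ) * ∫ ω, B ω ^ 2 ∂P := by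
    field_simp
  rw [this, hBsq] at hfinal
  exact hfinal
end
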